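/- arXiv:2601.07993 — 3 statements merged into one kernel-verified Lean document; each statement's English description precedes it below -/
import Mathlib

section
/- Let a ∈ [0, 1/2], let C be a copula, and let B_{a,C} be the ordinal sum of the single copula {C} with respect to the single interval {(a, 1−a)}. If ν is a copula measure of B_{a,C} and μ is a copula measure of C, then Kendall's tau satisfies τ(B_{a,C}) = (1−2a)²·τ(C) + 4a − 4a², i.e., 4·∫_{[0,1]²} B_{a,C} dν − 1 = (1−2a)²·(4·∫_{[0,1]²} C dμ − 1) + 4a − 4a². -/
open MeasureTheory Set

/-- A bivariate copula, viewed as a real function of two variables whose defining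
properties are required on the unit square. -/
def IsCopula (C : ℝ → ℝ → ℝ) : Prop :=
  (∀ v ∈ Icc (0:ℝ) 1, C 0 v = 0) ∧
  (∀ u ∈ Icc (0:ℝ) 1, C u 0 = 0) ∧
  (∀ u ∈ Icc (0:ℝ) 1, C u 1 = u) ∧
  (∀ v ∈ Icc (0:ℝ) 1, C 1 v = v) ∧
  (∀ u₁ u₂ v₁ v₂ : ℝ, 0 ≤ u₁ → u₁ ≤ u₂ → u₂ ≤ 1 → 0 ≤ v₁ → v₁ ≤ v₂ → v₂ ≤ 1 →
    0 ≤ C u₂ v₂ - C u₂ v₁ - C u₁ v₂ + C u₁ v₁)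

/-- Spearman's rho: ρ(C) = 12·∫₀¹∫₀¹ C(u,v) du dv − 3. -/
noncomputable def spearmanRho (C : ℝ → ℝ → ℝ) : ℝ :=
  12 * (∫ u in (0:ℝ)..1, ∫ v in (0:ℝ)..1, C u v) - 3

/-- Spearman's footrule: φ(C) = 6·∫₀¹ C(u,u) du − 2. -/
noncomputable def footrule (C : ℝ → ℝ → ℝ) : ℝ :=
  6 * (∫ u in (0:ℝ)..1, C u u) - 2

/-- Gini's gamma: γ(C) = 4·∫₀¹ C(u,u) du + 4·∫₀¹ C(u,1−u) du − 2. -/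
noncomputable def giniGamma (C : ℝ → ℝ → ℝ) : ℝ :=
  4 * (∫ u in (0:ℝ)..1, C u u) + 4 * (∫ u in (0:ℝ)..1, C u (1 - u)) - 2

/-- Blomqvist's beta: β(C) = 4·C(1/2,1/2) − 1. -/
noncomputable def blomqvistBeta (C : ℝ → ℝ → ℝ) : ℝ :=
  4 * C (1/2) (1/2) - 1

/-- A copula measure of a copula `C`: a probability measure on the plane with
μ([0,u]×[0,v]) = C(u,v) for u,v in the unit interval. -/
def IsCopulaMeasure (C : ℝ → ℝ → ℝ) (μ : Measure (ℝ × ℝ)) : Prop :=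
  IsProbabilityMeasure μ ∧
  ∀ u ∈ Icc (0:ℝ) 1, ∀ v ∈ Icc (0:ℝ) 1,
    μ (Icc 0 u ×ˢ Icc 0 v) = ENNReal.ofReal (C u v)

/-- Kendall's tau expressed via a copula measure μ of C:
τ(C) = 4·∫_{[0,1]²} C dμ − 1. -/
noncomputable def kendallTauInt (C : ℝ → ℝ → ℝ) (μ : Measure (ℝ × ℝ)) : ℝ :=
  4 * (∫ p in Icc (0:ℝ) 1 ×ˢ Icc (0:ℝ) 1, C p.1 p.2 ∂μ) - 1

/-- `B` is the ordinal sum of the copulas `Bk k` with respect to the pairwise disjoint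
open subintervals `(a k, b k)` of `[0,1]`. -/
def IsOrdinalSum {n : ℕ} (a b : Fin n → ℝ) (Bk : Fin n → ℝ → ℝ → ℝ)
    (B : ℝ → ℝ → ℝ) : Prop :=
  (∀ k, 0 ≤ a k ∧ a k ≤ b k ∧ b k ≤ 1) ∧
  (Pairwise fun i j => Disjoint (Ioo (a i) (b i)) (Ioo (a j) (b j))) ∧
  (∀ k, ∀ u ∈ Icc (a k) (b k), ∀ v ∈ Icc (a k) (b k),
    B u v = a k + (b k - a k) * Bk k ((u - a k) / (b k - a k)) ((v - a k) / (b k - a k))) ∧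
  (∀ u ∈ Icc (0:ℝ) 1, ∀ v ∈ Icc (0:ℝ) 1,
    (∀ k, ¬(u ∈ Icc (a k) (b k) ∧ v ∈ Icc (a k) (b k))) → B u v = min u v)

section CopBasic
variable {C : ℝ → ℝ → ℝ}

lemma cop_diff_left (hC : IsCopula C) {u₁ u₂ v : ℝ} (h0 : 0 ≤ u₁) (h12 : u₁ ≤ u₂) (h1 : u₂ ≤ 1)
    (hv : v ∈ Icc (0:ℝ) 1) : 0 ≤ C u₂ v - C u₁ v ∧ C u₂ v - C u₁ v ≤ u₂ - u₁ := by
  constructor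
  · have := hC.2.2.2.2 u₁ u₂ 0 v h0 h12 h1 le_rfl hv.1 hv.2
    rw [hC.2.1 u₁ ⟨h0, h12.trans h1⟩, hC.2.1 u₂ ⟨h0.trans h12, h1⟩] at this
    linarith
  · have := hC.2.2.2.2 u₁ u₂ v 1 h0 h12 h1 hv.1 hv.2 le_rfl
    rw [hC.2.2.1 u₁ ⟨h0, h12.trans h1⟩, hC.2.2.1 u₂ ⟨h0.trans h12, h1⟩] at this
    linarith

lemma cop_diff_right (hC : IsCopula C) {u v₁ v₂ : ℝ} (h0 : 0 ≤ v₁) (h12 : v₁ ≤ v₂) (h1 : v₂ ≤ 1)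
    (hu : u ∈ Icc (0:ℝ) 1) : 0 ≤ C u v₂ - C u v₁ ∧ C u v₂ - C u v₁ ≤ v₂ - v₁ := by
  constructor
  · have := hC.2.2.2.2 0 u v₁ v₂ le_rfl hu.1 hu.2 h0 h12 h1
    rw [hC.1 v₁ ⟨h0, h12.trans h1⟩, hC.1 v₂ ⟨h0.trans h12, h1⟩] at this
    linarith
  · have := hC.2.2.2.2 u 1 v₁ v₂ hu.1 hu.2 le_rfl h0 h12 h1
    rw [hC.2.2.2.1 v₁ ⟨h0, h12.trans h1⟩, hC.2.2.2.1 v₂ ⟨h0.trans h12, h1⟩] at this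
    linarith

lemma cop_nonneg (hC : IsCopula C) {u v : ℝ} (hu : u ∈ Icc (0:ℝ) 1) (hv : v ∈ Icc (0:ℝ) 1) :
    0 ≤ C u v := by
  have := (cop_diff_left hC le_rfl hu.1 hu.2 hv).1
  rw [hC.1 v hv] at this; linarith

lemma cop_le_one (hC : IsCopula C) {u v : ℝ} (hu : u ∈ Icc (0:ℝ) 1) (hv : v ∈ Icc (0:ℝ) 1) :
    C u v ≤ 1 := by
  have := (cop_diff_left hC hu.1 hu.2 le_rfl hv).1
  rw [hC.2.2.2.1 v hv] at this; linarith [hv.2]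

lemma cop_abs_diff_left (hC : IsCopula C) {a c : ℝ} (b : ℝ) (ha : a ∈ Icc (0:ℝ) 1)
    (hc : c ∈ Icc (0:ℝ) 1) (hb : b ∈ Icc (0:ℝ) 1) : |C a b - C c b| ≤ |a - c| := by
  rcases le_total c a with h | h
  · have := cop_diff_left hC hc.1 h ha.2 hb
    rw [abs_of_nonneg this.1, abs_of_nonneg (by linarith)]; linarith [this.2]
  · have := cop_diff_left hC ha.1 h hc.2 hb
    rw [abs_sub_comm, abs_of_nonneg this.1, abs_sub_comm, abs_of_nonneg (by linarith)]
    linarith [this.2]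

lemma cop_abs_diff_right (hC : IsCopula C) (a : ℝ) {b d : ℝ} (ha : a ∈ Icc (0:ℝ) 1)
    (hb : b ∈ Icc (0:ℝ) 1) (hd : d ∈ Icc (0:ℝ) 1) : |C a b - C a d| ≤ |b - d| := by
  rcases le_total d b with h | h
  · have := cop_diff_right hC hd.1 h hb.2 ha
    rw [abs_of_nonneg this.1, abs_of_nonneg (by linarith)]; linarith [this.2]
  · have := cop_diff_right hC hb.1 h hd.2 ha
    rw [abs_sub_comm, abs_of_nonneg this.1, abs_sub_comm, abs_of_nonneg (by linarith)]
    linarith [this.2]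

lemma cop_continuousOn (hC : IsCopula C) :
    ContinuousOn (fun p : ℝ × ℝ => C p.1 p.2) (Icc (0:ℝ) 1 ×ˢ Icc (0:ℝ) 1) := by
  have : LipschitzOnWith 2 (fun p : ℝ × ℝ => C p.1 p.2) (Icc (0:ℝ) 1 ×ˢ Icc (0:ℝ) 1) := by
    rw [lipschitzOnWith_iff_dist_le_mul]
    rintro ⟨x1, x2⟩ ⟨hx1, hx2⟩ ⟨y1, y2⟩ ⟨hy1, hy2⟩
    have h1 := cop_abs_diff_left hC x2 hx1 hy1 hx2
    have h2 := cop_abs_diff_right hC y1 hy1 hx2 hy2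
    have : |C x1 x2 - C y1 y2| ≤ |x1 - y1| + |x2 - y2| := by
      calc |C x1 x2 - C y1 y2| ≤ |C x1 x2 - C y1 x2| + |C y1 x2 - C y1 y2| := abs_sub_le _ _ _
        _ ≤ |x1 - y1| + |x2 - y2| := add_le_add h1 h2
    have hd1 : |x1 - y1| ≤ dist (x1, x2) (y1, y2) := by
      rw [Prod.dist_eq]; exact le_max_of_le_left (by rw [Real.dist_eq])
    have hd2 : |x2 - y2| ≤ dist (x1, x2) (y1, y2) := by
      rw [Prod.dist_eq]; exact le_max_of_le_right (by rw [Real.dist_eq])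
    simp only [Real.dist_eq]
    push_cast
    calc |C x1 x2 - C y1 y2| ≤ |x1 - y1| + |x2 - y2| := this
      _ ≤ 2 * dist (x1, x2) (y1, y2) := by linarith
  exact this.continuousOn

end CopBasic

noncomputable def cl (x : ℝ) : ℝ := min 1 (max 0 x)

lemma cl_mem (x : ℝ) : cl x ∈ Icc (0:ℝ) 1 :=
  ⟨le_min zero_le_one (le_max_left 0 x), min_le_left 1 _⟩

lemma cl_of_nonpos {x : ℝ} (h : x ≤ 0) : cl x = 0 := by
  simp [cl, max_eq_left h]

lemma cl_of_one_le {x : ℝ} (h : 1 ≤ x) : cl x = 1 := by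
  have : (0:ℝ) ≤ x := le_trans zero_le_one h
  simp [cl, max_eq_right this, min_eq_left h]

lemma cl_of_mem {x : ℝ} (h0 : 0 ≤ x) (h1 : x ≤ 1) : cl x = x := by
  simp [cl, max_eq_right h0, min_eq_right h1]

lemma continuous_cl : Continuous cl :=
  continuous_const.min (continuous_const.max continuous_id)

section
variable {aP : ℝ} {C B : ℝ → ℝ → ℝ}

lemma Bmin (hB : IsOrdinalSum (fun _ : Fin 1 => aP) (fun _ => 1 - aP) (fun _ => C) B)
    {u v : ℝ} (hu : u ∈ Icc (0:ℝ) 1) (hv : v ∈ Icc (0:ℝ) 1)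
    (h : ¬(u ∈ Icc aP (1-aP) ∧ v ∈ Icc aP (1-aP))) : B u v = min u v :=
  hB.2.2.2 u hu v hv (fun _ => h)

lemma BS (hB : IsOrdinalSum (fun _ : Fin 1 => aP) (fun _ => 1 - aP) (fun _ => C) B)
    {u v : ℝ} (hu : u ∈ Icc aP (1-aP)) (hv : v ∈ Icc aP (1-aP)) :
    B u v = aP + (1 - 2*aP) * C ((u - aP) / (1 - 2*aP)) ((v - aP) / (1 - 2*aP)) := by
  have := hB.2.2.1 0 u hu v hv
  rw [this]; ring_nf

lemma sum_formula (ha : aP ∈ Icc (0:ℝ) (1/2)) (hC : IsCopula C)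
    (hB : IsOrdinalSum (fun _ : Fin 1 => aP) (fun _ => 1 - aP) (fun _ => C) B) :
    ∀ u ∈ Icc (0:ℝ) 1, ∀ v ∈ Icc (0:ℝ) 1,
      B u v = min aP (min u v) + max 0 (min u v - (1-aP)) +
        (1 - 2*aP) * C (cl ((u - aP) / (1 - 2*aP))) (cl ((v - aP) / (1 - 2*aP))) := by
  obtain ⟨ha0, ha2⟩ := ha
  intro u hu v hv
  rcases eq_or_lt_of_le ha2 with h12 | h12
  · -- aP = 1/2
    subst h12
    have hz : 1 - 2*(1/2 : ℝ) = 0 := by norm_num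
    rw [hz, zero_mul, add_zero]
    have hBm : B u v = min u v := by
      by_cases h : u ∈ Icc (1/2 : ℝ) (1-1/2) ∧ v ∈ Icc (1/2 : ℝ) (1-1/2)
      · have hu2 : u = 1/2 := le_antisymm (h.1.2.trans (by norm_num)) h.1.1
        have hv2 : v = 1/2 := le_antisymm (h.2.2.trans (by norm_num)) h.2.1
        rw [BS hB h.1 h.2, hz, zero_mul, add_zero, hu2, hv2, min_self]
      · exact Bmin hB hu hv h
    rw [hBm]
    rcases le_total (min u v) (1/2 : ℝ) with h | h
    · rw [min_eq_right h, max_eq_left (by linarith)]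
      ring
    · rw [min_eq_left h, max_eq_right (by linarith)]
      ring
  · -- aP < 1/2
    have hd : 0 < 1 - 2*aP := by linarith
    have ha1 : aP ≤ 1 - aP := by linarith
    set s := (u - aP) / (1 - 2*aP) with hs
    set t := (v - aP) / (1 - 2*aP) with ht
    rcases lt_or_ge (min u v) aP with hm | hm
    · -- min < aP : B = min, third term 0
      have hnot : ¬(u ∈ Icc aP (1-aP) ∧ v ∈ Icc aP (1-aP)) := by
        rcases min_lt_iff.mp hm with h | h
        · exact fun hc => absurd hc.1.1 (not_le.mpr h)
        · exact fun hc => absurd hc.2.1 (not_le.mpr h)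
      rw [Bmin hB hu hv hnot]
      have h1 : min aP (min u v) = min u v := min_eq_right hm.le
      have h2 : max 0 (min u v - (1-aP)) = 0 :=
        max_eq_left (by have := min_le_left u v; have := hu.2; linarith [min_lt_iff.mp hm])
      have h3 : C (cl s) (cl t) = 0 := by
        rcases min_lt_iff.mp hm with h | h
        · have : cl s = 0 := cl_of_nonpos (div_nonpos_of_nonpos_of_nonneg (by linarith) hd.le)
          rw [this]; exact hC.1 _ (cl_mem t)
        · have : cl t = 0 := cl_of_nonpos (div_nonpos_of_nonpos_of_nonneg (by linarith) hd.le)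
          rw [this]; exact hC.2.1 _ (cl_mem s)
      rw [h1, h2, h3]; ring
    · have hua : aP ≤ u := le_trans hm (min_le_left u v)
      have hva : aP ≤ v := le_trans hm (min_le_right u v)
      have h1 : min aP (min u v) = aP := min_eq_left hm
      rcases le_or_gt u (1-aP) with hu1 | hu1 <;> rcases le_or_gt v (1-aP) with hv1 | hv1
      · -- middle square
        have hcs : cl s = s := cl_of_mem (div_nonneg (by linarith) hd.le)
          ((div_le_one hd).mpr (by linarith))
        have hct : cl t = t := cl_of_mem (div_nonneg (by linarith) hd.le)
          ((div_le_one hd).mpr (by linarith))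
        have h2 : max 0 (min u v - (1-aP)) = 0 :=
          max_eq_left (by have := min_le_left u v; linarith)
        rw [BS hB ⟨hua, hu1⟩ ⟨hva, hv1⟩, h1, h2, hcs, hct]; ring
      · -- u ≤ 1-aP < v
        have hBm : B u v = u := by
          rw [Bmin hB hu hv (fun hc => absurd hc.2.2 (not_le.mpr hv1)),
            min_eq_left (by linarith)]
        have hcs : cl s = s := cl_of_mem (div_nonneg (by linarith) hd.le)
          ((div_le_one hd).mpr (by linarith))
        have hct : cl t = 1 := cl_of_one_le ((one_le_div hd).mpr (by linarith))
        have h2 : max 0 (min u v - (1-aP)) = 0 :=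
          max_eq_left (by have := min_le_left u v; linarith [min_le_left u v]; )
        rw [hBm, h1, h2, hcs, hct, hC.2.2.1 s ⟨div_nonneg (by linarith) hd.le,
          (div_le_one hd).mpr (by linarith)⟩, hs]
        rw [mul_div_assoc', mul_div_cancel_left₀ _ hd.ne']; ring
      · -- v ≤ 1-aP < u
        have hBm : B u v = v := by
          rw [Bmin hB hu hv (fun hc => absurd hc.1.2 (not_le.mpr hu1)),
            min_eq_right (by linarith)]
        have hct : cl t = t := cl_of_mem (div_nonneg (by linarith) hd.le)
          ((div_le_one hd).mpr (by linarith))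
        have hcs : cl s = 1 := cl_of_one_le ((one_le_div hd).mpr (by linarith))
        have h2 : max 0 (min u v - (1-aP)) = 0 :=
          max_eq_left (by have := min_le_right u v; linarith)
        rw [hBm, h1, h2, hcs, hct, hC.2.2.2.1 t ⟨div_nonneg (by linarith) hd.le,
          (div_le_one hd).mpr (by linarith)⟩, ht]
        rw [mul_div_assoc', mul_div_cancel_left₀ _ hd.ne']; ring
      · -- both > 1-aP
        have hBm : B u v = min u v := by
          exact Bmin hB hu hv (fun hc => absurd hc.1.2 (not_le.mpr hu1))
        have hcs : cl s = 1 := cl_of_one_le ((one_le_div hd).mpr (by linarith))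
        have hct : cl t = 1 := cl_of_one_le ((one_le_div hd).mpr (by linarith))
        have hC11 : C 1 1 = 1 := by
          have := hC.2.2.1 1 ⟨zero_le_one, le_rfl⟩; exact this
        have h2 : max 0 (min u v - (1-aP)) = min u v - (1-aP) := by
          rcases le_total u v with h | h
          · rw [min_eq_left h]; exact max_eq_right (by linarith)
          · rw [min_eq_right h]; exact max_eq_right (by linarith)
        rw [hBm, h1, h2, hcs, hct, hC11]; ring
end

section MeasureLemmas
variable {F : ℝ → ℝ → ℝ} {μ : Measure (ℝ × ℝ)}

lemma cm_Q_one (hμ : IsCopulaMeasure F μ) (h11 : F 1 1 = 1) :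
    μ (Icc (0:ℝ) 1 ×ˢ Icc (0:ℝ) 1) = 1 := by
  rw [hμ.2 1 ⟨zero_le_one, le_rfl⟩ 1 ⟨zero_le_one, le_rfl⟩, h11, ENNReal.ofReal_one]

lemma cm_compl (hμ : IsCopulaMeasure F μ) (h11 : F 1 1 = 1) :
    μ (Icc (0:ℝ) 1 ×ˢ Icc (0:ℝ) 1)ᶜ = 0 := by
  haveI := hμ.1
  rw [measure_compl (measurableSet_Icc.prod measurableSet_Icc) (measure_ne_top μ _),
    cm_Q_one hμ h11, measure_univ, tsub_self]

lemma cm_inter (hμ : IsCopulaMeasure F μ) (h11 : F 1 1 = 1) (s : Set (ℝ × ℝ)) :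
    μ (s ∩ Icc (0:ℝ) 1 ×ˢ Icc (0:ℝ) 1) = μ s :=
  measure_inter_conull (cm_compl hμ h11)

lemma cm_Iic (hμ : IsCopulaMeasure F μ) (h11 : F 1 1 = 1)
    (h0l : ∀ y ∈ Icc (0:ℝ) 1, F 0 y = 0) (h0r : ∀ y ∈ Icc (0:ℝ) 1, F y 0 = 0) (u v : ℝ) :
    μ (Iic u ×ˢ Iic v) = ENNReal.ofReal (F (cl u) (cl v)) := by
  rw [← cm_inter hμ h11, prod_inter_prod]
  rcases lt_or_ge u 0 with hu | hu
  · have he : Iic u ∩ Icc (0:ℝ) 1 = ∅ := by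
      ext x; simp only [mem_inter_iff, mem_Iic, mem_Icc, mem_empty_iff_false, iff_false]
      rintro ⟨h1, h2, _⟩; linarith
    rw [he, empty_prod, measure_empty, cl_of_nonpos hu.le,
      h0l _ (cl_mem v), ENNReal.ofReal_zero]
  rcases lt_or_ge v 0 with hv | hv
  · have he : Iic v ∩ Icc (0:ℝ) 1 = ∅ := by
      ext x; simp only [mem_inter_iff, mem_Iic, mem_Icc, mem_empty_iff_false, iff_false]
      rintro ⟨h1, h2, _⟩; linarith
    rw [he, prod_empty, measure_empty, cl_of_nonpos hv.le,
      h0r _ (cl_mem u), ENNReal.ofReal_zero]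
  have key : ∀ w : ℝ, 0 ≤ w → Iic w ∩ Icc (0:ℝ) 1 = Icc 0 (cl w) := by
    intro w hw
    ext x
    simp only [mem_inter_iff, mem_Iic, mem_Icc, cl, max_eq_right hw, le_min_iff]
    constructor
    · rintro ⟨h1, h2, h3⟩; exact ⟨h2, h3, h1⟩
    · rintro ⟨h1, h2, h3⟩; exact ⟨h3, h1, h2⟩
  rw [key u hu, key v hv, hμ.2 _ (cl_mem u) _ (cl_mem v)]

end MeasureLemmas


section Bfacts
variable {aP : ℝ} {C B : ℝ → ℝ → ℝ}

lemma B_zero_left (ha : aP ∈ Icc (0:ℝ) (1/2)) (hC : IsCopula C)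
    (hB : IsOrdinalSum (fun _ : Fin 1 => aP) (fun _ => 1 - aP) (fun _ => C) B) :
    ∀ y ∈ Icc (0:ℝ) 1, B 0 y = 0 := by
  intro y hy
  rw [sum_formula ha hC hB 0 ⟨le_rfl, zero_le_one⟩ y hy]
  have h1 : min (0:ℝ) y = 0 := min_eq_left hy.1
  have h2 : cl ((0 - aP) / (1 - 2*aP)) = 0 :=
    cl_of_nonpos (div_nonpos_of_nonpos_of_nonneg (by linarith [ha.1]) (by linarith [ha.2]))
  rw [h1, h2, hC.1 _ (cl_mem _), min_eq_right ha.1, max_eq_left (by linarith [ha.2])]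
  ring

lemma B_zero_right (ha : aP ∈ Icc (0:ℝ) (1/2)) (hC : IsCopula C)
    (hB : IsOrdinalSum (fun _ : Fin 1 => aP) (fun _ => 1 - aP) (fun _ => C) B) :
    ∀ y ∈ Icc (0:ℝ) 1, B y 0 = 0 := by
  intro y hy
  rw [sum_formula ha hC hB y hy 0 ⟨le_rfl, zero_le_one⟩]
  have h1 : min y (0:ℝ) = 0 := min_eq_right hy.1
  have h2 : cl ((0 - aP) / (1 - 2*aP)) = 0 :=
    cl_of_nonpos (div_nonpos_of_nonpos_of_nonneg (by linarith [ha.1]) (by linarith [ha.2]))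
  rw [h1, h2, hC.2.1 _ (cl_mem _), min_eq_right ha.1, max_eq_left (by linarith [ha.2])]
  ring

lemma B_one_one (ha : aP ∈ Icc (0:ℝ) (1/2)) (hC : IsCopula C)
    (hB : IsOrdinalSum (fun _ : Fin 1 => aP) (fun _ => 1 - aP) (fun _ => C) B) :
    B 1 1 = 1 := by
  rw [sum_formula ha hC hB 1 ⟨zero_le_one, le_rfl⟩ 1 ⟨zero_le_one, le_rfl⟩]
  have h1 : min (1:ℝ) 1 = 1 := min_self 1
  rw [h1, min_eq_left (by linarith [ha.2]), max_eq_right (by linarith [ha.1])]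
  rcases eq_or_lt_of_le ha.2 with h12 | h12
  · rw [h12]; norm_num
  · have hd : 0 < 1 - 2*aP := by linarith
    have hcl : cl ((1 - aP) / (1 - 2*aP)) = 1 :=
      cl_of_one_le ((one_le_div hd).mpr (by linarith [ha.1]))
    rw [hcl, hC.2.2.1 1 ⟨zero_le_one, le_rfl⟩]
    ring

end Bfacts


lemma ofReal_max0 (x : ℝ) : ENNReal.ofReal x = ENNReal.ofReal (max 0 x) := by
  rcases le_total x 0 with h | h
  · rw [ENNReal.ofReal_of_nonpos h, max_eq_left h, ENNReal.ofReal_zero]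
  · rw [max_eq_right h]

lemma realA {aP : ℝ} (m : ℝ) (ha0 : 0 ≤ aP) (ha1 : aP ≤ 1) :
    max 0 (min m aP) = min aP (cl m) := by
  simp only [cl, min_def, max_def]; split_ifs <;> linarith

lemma realB {aP : ℝ} (m : ℝ) (ha1 : aP ≤ 1) :
    max 0 (min m 1 - (1-aP)) = max 0 (cl m - (1 - aP)) := by
  simp only [cl, min_def, max_def]; split_ifs <;> linarith

lemma monotone_cl : Monotone cl := fun _ _ h => min_le_min le_rfl (max_le_max le_rfl h)

lemma cl_min (u v : ℝ) : cl (min u v) = min (cl u) (cl v) := monotone_cl.map_min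

noncomputable def diagM (c d : ℝ) : Measure (ℝ × ℝ) :=
  Measure.map (fun t => (t, t)) (volume.restrict (Icc c d))

lemma measurable_diagT : Measurable (fun t : ℝ => (t, t)) :=
  measurable_id.prodMk measurable_id

lemma diag_preimage (u v : ℝ) : (fun t : ℝ => (t, t)) ⁻¹' (Iic u ×ˢ Iic v) = Iic (min u v) := by
  ext t; simp [le_min_iff]

lemma diagM_Iic (c d u v : ℝ) :
    diagM c d (Iic u ×ˢ Iic v) = volume (Iic (min u v) ∩ Icc c d) := by
  rw [diagM, Measure.map_apply measurable_diagT (measurableSet_Iic.prod measurableSet_Iic),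
    diag_preimage, Measure.restrict_apply measurableSet_Iic]

lemma diagM_univ (c d : ℝ) : diagM c d univ = volume (Icc c d) := by
  rw [diagM, Measure.map_apply measurable_diagT MeasurableSet.univ, preimage_univ,
    Measure.restrict_apply MeasurableSet.univ, univ_inter]

noncomputable def nu0 (aP : ℝ) (μ : Measure (ℝ × ℝ)) : Measure (ℝ × ℝ) :=
  diagM 0 aP +
    ENNReal.ofReal (1 - 2*aP) •
      Measure.map (fun p : ℝ × ℝ => (aP + (1 - 2*aP)*p.1, aP + (1 - 2*aP)*p.2)) μ +
    diagM (1 - aP) 1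

lemma measurable_T (aP : ℝ) :
    Measurable (fun p : ℝ × ℝ => (aP + (1 - 2*aP)*p.1, aP + (1 - 2*aP)*p.2)) :=
  ((measurable_const.mul measurable_fst).const_add aP).prodMk
    ((measurable_const.mul measurable_snd).const_add aP)

section Nu0
variable {aP : ℝ} {C B : ℝ → ℝ → ℝ} {μ : Measure (ℝ × ℝ)}

lemma nu0_Iic (ha : aP ∈ Icc (0:ℝ) (1/2)) (hC : IsCopula C)
    (hB : IsOrdinalSum (fun _ : Fin 1 => aP) (fun _ => 1 - aP) (fun _ => C) B)
    (hμ : IsCopulaMeasure C μ) (u v : ℝ) :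
    nu0 aP μ (Iic u ×ˢ Iic v) = ENNReal.ofReal (B (cl u) (cl v)) := by
  obtain ⟨ha0, ha2⟩ := ha
  set m := min u v with hm
  have hC11 : C 1 1 = 1 := hC.2.2.1 1 ⟨zero_le_one, le_rfl⟩
  -- piece 1
  have hp1 : diagM 0 aP (Iic u ×ˢ Iic v) = ENNReal.ofReal (min aP (min (cl u) (cl v))) := by
    rw [diagM_Iic]
    have : Iic m ∩ Icc (0:ℝ) aP = Icc 0 (min m aP) := by
      ext x; simp only [mem_inter_iff, mem_Iic, mem_Icc, le_min_iff]; tauto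
    rw [this, Real.volume_Icc, sub_zero, ofReal_max0, realA m ha0 (by linarith), cl_min]
  -- piece 3
  have hp3 : diagM (1-aP) 1 (Iic u ×ˢ Iic v) =
      ENNReal.ofReal (max 0 (min (cl u) (cl v) - (1 - aP))) := by
    rw [diagM_Iic]
    have : Iic m ∩ Icc (1-aP) (1:ℝ) = Icc (1-aP) (min m 1) := by
      ext x; simp only [mem_inter_iff, mem_Iic, mem_Icc, le_min_iff]; tauto
    rw [this, Real.volume_Icc, ofReal_max0, realB m (by linarith), cl_min]
  -- piece 2
  have hp2 : (ENNReal.ofReal (1 - 2*aP) •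
      Measure.map (fun p : ℝ × ℝ => (aP + (1 - 2*aP)*p.1, aP + (1 - 2*aP)*p.2)) μ)
      (Iic u ×ˢ Iic v) =
      ENNReal.ofReal ((1 - 2*aP) *
        C (cl ((cl u - aP) / (1 - 2*aP))) (cl ((cl v - aP) / (1 - 2*aP)))) := by
    rw [Measure.smul_apply, smul_eq_mul]
    rcases eq_or_lt_of_le ha2 with h12 | h12
    · have hz : 1 - 2*aP = 0 := by rw [h12]; norm_num
      rw [hz, ENNReal.ofReal_zero, zero_mul, zero_mul, ENNReal.ofReal_zero]
    · have hd : (0:ℝ) < 1 - 2*aP := by linarith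
      rw [Measure.map_apply (measurable_T aP) (measurableSet_Iic.prod measurableSet_Iic)]
      have hpre : (fun p : ℝ × ℝ => (aP + (1 - 2*aP)*p.1, aP + (1 - 2*aP)*p.2)) ⁻¹'
          (Iic u ×ˢ Iic v) = Iic ((u - aP)/(1 - 2*aP)) ×ˢ Iic ((v - aP)/(1 - 2*aP)) := by
        ext p
        simp only [mem_preimage, mem_prod, mem_Iic, le_div_iff₀ hd]
        constructor <;> rintro ⟨h1, h2⟩ <;> constructor <;> linarith
      rw [hpre, cm_Iic hμ hC11 hC.1 hC.2.1, ← ENNReal.ofReal_mul hd.le]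
      congr 2
      have key : ∀ w : ℝ, cl ((w - aP)/(1 - 2*aP)) = cl ((cl w - aP)/(1 - 2*aP)) := by
        intro w
        rcases le_total w 0 with h | h
        · rw [cl_of_nonpos h,
            cl_of_nonpos (div_nonpos_of_nonpos_of_nonneg (by linarith) hd.le),
            cl_of_nonpos (div_nonpos_of_nonpos_of_nonneg (by linarith) hd.le)]
        rcases le_total 1 w with h1 | h1
        · rw [cl_of_one_le h1,
            cl_of_one_le ((one_le_div hd).mpr (by linarith)),
            cl_of_one_le ((one_le_div hd).mpr (by linarith))]
        · rw [cl_of_mem h h1]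
      rw [key u, key v]
  -- combine
  have h1n : 0 ≤ min aP (min (cl u) (cl v)) :=
    le_min ha0 (le_min (cl_mem u).1 (cl_mem v).1)
  have h2n : 0 ≤ (1 - 2*aP) *
      C (cl ((cl u - aP) / (1 - 2*aP))) (cl ((cl v - aP) / (1 - 2*aP))) :=
    mul_nonneg (by linarith) (cop_nonneg hC (cl_mem _) (cl_mem _))
  rw [nu0, Measure.add_apply, Measure.add_apply, hp1, hp2, hp3,
    ← ENNReal.ofReal_add h1n h2n, ← ENNReal.ofReal_add (by positivity) (le_max_left 0 _),
    sum_formula ⟨ha0, ha2⟩ hC hB (cl u) (cl_mem u) (cl v) (cl_mem v)]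
  congr 1
  have := cl_min u v
  ring

lemma nu0_univ (ha : aP ∈ Icc (0:ℝ) (1/2)) (hμ : IsCopulaMeasure C μ) :
    nu0 aP μ univ = 1 := by
  haveI := hμ.1
  rw [nu0, Measure.add_apply, Measure.add_apply, diagM_univ, diagM_univ,
    Measure.smul_apply, smul_eq_mul, Measure.map_apply (measurable_T aP) MeasurableSet.univ,
    preimage_univ, measure_univ, mul_one, Real.volume_Icc, Real.volume_Icc, sub_zero,
    ← ENNReal.ofReal_add ha.1 (by linarith [ha.2]),
    ← ENNReal.ofReal_add (by linarith [ha.1, ha.2]) (by linarith [ha.1, ha.2])]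
  norm_num
  ring_nf

end Nu0


open MeasurableSpace in
lemma iic_spanning : IsCountablySpanning (range (Iic : ℝ → Set ℝ)) := by
  refine ⟨fun n => Iic (n:ℝ), fun n => mem_range_self _, ?_⟩
  ext x; simp only [mem_iUnion, mem_Iic, mem_univ, iff_true]
  exact (exists_nat_ge x)

open MeasurableSpace in
lemma measure_ext_Iic (μ ν : Measure (ℝ×ℝ)) [IsFiniteMeasure μ] [IsFiniteMeasure ν]
    (h : ∀ u v : ℝ, μ (Iic u ×ˢ Iic v) = ν (Iic u ×ˢ Iic v)) (huniv : μ univ = ν univ) : μ = ν := by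
  refine ext_of_generate_finite _ ?_ (isPiSystem_Iic.prod isPiSystem_Iic) ?_ huniv
  · exact (generateFrom_eq_prod (borel_eq_generateFrom_Iic ℝ ▸ BorelSpace.measurable_eq.symm)
      (borel_eq_generateFrom_Iic ℝ ▸ BorelSpace.measurable_eq.symm) iic_spanning iic_spanning).symm
  · rintro s ⟨_, ⟨u, rfl⟩, _, ⟨v, rfl⟩, rfl⟩
    exact h u v


section Final
variable {aP : ℝ} {C B : ℝ → ℝ → ℝ} {μ ν : Measure (ℝ × ℝ)}

lemma nu_eq_nu0 (ha : aP ∈ Icc (0:ℝ) (1/2)) (hC : IsCopula C)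
    (hB : IsOrdinalSum (fun _ : Fin 1 => aP) (fun _ => 1 - aP) (fun _ => C) B)
    (hν : IsCopulaMeasure B ν) (hμ : IsCopulaMeasure C μ) : ν = nu0 aP μ := by
  haveI := hν.1
  haveI : IsFiniteMeasure (nu0 aP μ) :=
    ⟨by rw [nu0_univ ha hμ]; exact ENNReal.one_lt_top⟩
  apply measure_ext_Iic
  · intro u v
    rw [cm_Iic hν (B_one_one ha hC hB) (B_zero_left ha hC hB) (B_zero_right ha hC hB),
      nu0_Iic ha hC hB hμ]
  · rw [measure_univ, nu0_univ ha hμ]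

end Final


/-- Kendall's tau of the ordinal sum of a single copula C on the interval (a, 1−a):
τ(B) = (1−2a)²·τ(C) + 4a − 4a². -/
theorem kendallTau_ordinalSum_single (aP : ℝ) (ha : aP ∈ Icc (0:ℝ) (1/2))
    (C B : ℝ → ℝ → ℝ) (hC : IsCopula C)
    (hB : IsOrdinalSum (fun _ : Fin 1 => aP) (fun _ => 1 - aP) (fun _ => C) B)
    (ν : Measure (ℝ × ℝ)) (hν : IsCopulaMeasure B ν)
    (μ : Measure (ℝ × ℝ)) (hμ : IsCopulaMeasure C μ) :
    kendallTauInt B ν = (1 - 2*aP) ^ 2 * kendallTauInt C μ + 4*aP - 4*aP^2 := by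
  obtain ⟨ha0, ha2⟩ := ha
  haveI hνP := hν.1
  haveI hμP := hμ.1
  have hC11 : C 1 1 = 1 := hC.2.2.1 1 ⟨zero_le_one, le_rfl⟩
  set Q : Set (ℝ × ℝ) := Icc (0:ℝ) 1 ×ˢ Icc (0:ℝ) 1 with hQdef
  have hQm : MeasurableSet Q := measurableSet_Icc.prod measurableSet_Icc
  have hQc : IsCompact Q := isCompact_Icc.prod isCompact_Icc
  have hcontC : ContinuousOn (fun p : ℝ × ℝ => C p.1 p.2) Q := cop_continuousOn hC
  -- continuity of B on Q
  have hGcont : ContinuousOn (fun p : ℝ × ℝ => min aP (min p.1 p.2) +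
      max 0 (min p.1 p.2 - (1-aP)) +
      (1 - 2*aP) * C (cl ((p.1 - aP) / (1 - 2*aP))) (cl ((p.2 - aP) / (1 - 2*aP)))) Q := by
    have g1 : Continuous fun p : ℝ × ℝ => min aP (min p.1 p.2) :=
      continuous_const.min (continuous_fst.min continuous_snd)
    have g2 : Continuous fun p : ℝ × ℝ => max 0 (min p.1 p.2 - (1-aP)) :=
      continuous_const.max ((continuous_fst.min continuous_snd).sub continuous_const)
    have inner : Continuous fun p : ℝ × ℝ =>
        (cl ((p.1 - aP) / (1 - 2*aP)), cl ((p.2 - aP) / (1 - 2*aP))) :=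
      (continuous_cl.comp ((continuous_fst.sub continuous_const).div_const _)).prodMk
        (continuous_cl.comp ((continuous_snd.sub continuous_const).div_const _))
    have g3 : ContinuousOn (fun p : ℝ × ℝ =>
        C (cl ((p.1 - aP) / (1 - 2*aP))) (cl ((p.2 - aP) / (1 - 2*aP)))) Q :=
      hcontC.comp inner.continuousOn (fun p _ => ⟨cl_mem _, cl_mem _⟩)
    exact (g1.continuousOn.add g2.continuousOn).add (continuousOn_const.mul g3)
  have hcont : ContinuousOn (fun p : ℝ × ℝ => B p.1 p.2) Q :=
    hGcont.congr (fun p hp => sum_formula ⟨ha0, ha2⟩ hC hB p.1 hp.1 p.2 hp.2)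
  -- finite measure instances
  haveI i1 : IsFiniteMeasure (diagM 0 aP) :=
    ⟨by rw [diagM_univ, Real.volume_Icc]; exact ENNReal.ofReal_lt_top⟩
  haveI i3 : IsFiniteMeasure (diagM (1-aP) 1) :=
    ⟨by rw [diagM_univ, Real.volume_Icc]; exact ENNReal.ofReal_lt_top⟩
  haveI i2 : IsFiniteMeasure (ENNReal.ofReal (1 - 2*aP) •
      Measure.map (fun p : ℝ × ℝ => (aP + (1 - 2*aP)*p.1, aP + (1 - 2*aP)*p.2)) μ) :=
    ⟨by rw [Measure.smul_apply, smul_eq_mul,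
          Measure.map_apply (measurable_T aP) MeasurableSet.univ, preimage_univ,
          measure_univ, mul_one]
        exact ENNReal.ofReal_lt_top⟩
  haveI j1 : IsFiniteMeasureOnCompacts (diagM 0 aP) := ⟨fun K _ => measure_lt_top _ K⟩
  haveI j3 : IsFiniteMeasureOnCompacts (diagM (1-aP) 1) := ⟨fun K _ => measure_lt_top _ K⟩
  haveI j2 : IsFiniteMeasureOnCompacts (ENNReal.ofReal (1 - 2*aP) •
      Measure.map (fun p : ℝ × ℝ => (aP + (1 - 2*aP)*p.1, aP + (1 - 2*aP)*p.2)) μ) :=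
    ⟨fun K _ => measure_lt_top _ K⟩
  have hint1 : IntegrableOn (fun p : ℝ × ℝ => B p.1 p.2) Q (diagM 0 aP) :=
    hcont.integrableOn_compact hQc
  have hint3 : IntegrableOn (fun p : ℝ × ℝ => B p.1 p.2) Q (diagM (1-aP) 1) :=
    hcont.integrableOn_compact hQc
  have hint2 : IntegrableOn (fun p : ℝ × ℝ => B p.1 p.2) Q (ENNReal.ofReal (1 - 2*aP) •
      Measure.map (fun p : ℝ × ℝ => (aP + (1 - 2*aP)*p.1, aP + (1 - 2*aP)*p.2)) μ) :=
    hcont.integrableOn_compact hQc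
  -- diagonal closed embedding
  have hdiag : Topology.IsClosedEmbedding (fun t : ℝ => (t, t)) := by
    have : Isometry (fun t : ℝ => (t, t)) := by
      intro x y; simp [Prod.edist_eq]
    exact this.isClosedEmbedding
  have hpreQ : (fun t : ℝ => (t, t)) ⁻¹' Q = Icc (0:ℝ) 1 := by
    ext t; simp [hQdef, Prod.le_def]
  -- values of B on the diagonal
  have hBtt1 : ∀ t ∈ Icc (0:ℝ) aP, B t t = t := by
    intro t ht
    obtain ⟨ht1, ht2⟩ := ht
    by_cases hmem : t ∈ Icc aP (1-aP)
    · have htp : t = aP := le_antisymm ht2 hmem.1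
      rw [BS hB hmem hmem, htp, sub_self, zero_div, hC.1 0 ⟨le_rfl, zero_le_one⟩, mul_zero,
        add_zero]
    · rw [Bmin hB ⟨ht1, by linarith⟩ ⟨ht1, by linarith⟩ (fun hc => hmem hc.1), min_self]
  have hBtt3 : ∀ t ∈ Icc (1-aP) (1:ℝ), B t t = t := by
    intro t ht
    obtain ⟨ht1, ht2⟩ := ht
    by_cases hmem : t ∈ Icc aP (1-aP)
    · have htp : t = 1 - aP := le_antisymm hmem.2 ht1
      rw [BS hB hmem hmem, htp]
      have heq : (1 - aP - aP) / (1 - 2*aP) = (1 - 2*aP) / (1 - 2*aP) := by ring_nf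
      rw [heq]
      rcases eq_or_lt_of_le ha2 with h12 | h12
      · rw [h12]; norm_num
      · have hd : (0:ℝ) < 1 - 2*aP := by linarith
        rw [div_self hd.ne', hC11, mul_one]; ring
    · rw [Bmin hB ⟨by linarith, ht2⟩ ⟨by linarith, ht2⟩ (fun hc => hmem hc.1), min_self]
  -- piece 1
  have e1 : ∫ p in Q, B p.1 p.2 ∂(diagM 0 aP) = aP^2 / 2 := by
    rw [diagM, hdiag.setIntegral_map, hpreQ, Measure.restrict_restrict measurableSet_Icc,
      inter_eq_self_of_subset_right (Icc_subset_Icc le_rfl (by linarith)),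
      setIntegral_congr_fun measurableSet_Icc (fun t ht => hBtt1 t ht),
      integral_Icc_eq_integral_Ioc, ← intervalIntegral.integral_of_le ha0,
      integral_id]
    ring
  -- piece 3
  have e3 : ∫ p in Q, B p.1 p.2 ∂(diagM (1-aP) 1) = (1 - (1-aP)^2) / 2 := by
    rw [diagM, hdiag.setIntegral_map, hpreQ, Measure.restrict_restrict measurableSet_Icc,
      inter_eq_self_of_subset_right (Icc_subset_Icc (by linarith) le_rfl),
      setIntegral_congr_fun measurableSet_Icc (fun t ht => hBtt3 t ht),
      integral_Icc_eq_integral_Ioc, ← intervalIntegral.integral_of_le (by linarith),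
      integral_id]
    ring
  -- piece 2
  have e2 : ∫ p in Q, B p.1 p.2 ∂(ENNReal.ofReal (1 - 2*aP) •
      Measure.map (fun p : ℝ × ℝ => (aP + (1 - 2*aP)*p.1, aP + (1 - 2*aP)*p.2)) μ) =
      (1 - 2*aP) * (aP + (1 - 2*aP) * (∫ p in Q, C p.1 p.2 ∂μ)) := by
    rcases eq_or_lt_of_le ha2 with h12 | h12
    · have hz : (1:ℝ) - 2*aP = 0 := by rw [h12]; norm_num
      rw [hz, ENNReal.ofReal_zero, zero_smul, Measure.restrict_zero, integral_zero_measure,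
        zero_mul]
    · have hd : (0:ℝ) < 1 - 2*aP := by linarith
      have hT : Topology.IsClosedEmbedding
          (fun p : ℝ × ℝ => (aP + (1 - 2*aP)*p.1, aP + (1 - 2*aP)*p.2)) := by
        have h1 : (fun p : ℝ × ℝ => (aP + (1 - 2*aP)*p.1, aP + (1 - 2*aP)*p.2)) =
            ⇑(((Homeomorph.mulLeft₀ (1 - 2*aP) hd.ne').trans
              (Homeomorph.addLeft aP)).prodCongr
             ((Homeomorph.mulLeft₀ (1 - 2*aP) hd.ne').trans (Homeomorph.addLeft aP))) := rfl
        rw [h1]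
        exact Homeomorph.isClosedEmbedding _
      rw [Measure.restrict_smul, integral_smul_measure, hT.setIntegral_map]
      have hQsub : Q ⊆ (fun p : ℝ × ℝ => (aP + (1 - 2*aP)*p.1, aP + (1 - 2*aP)*p.2)) ⁻¹' Q := by
        rintro ⟨p1, p2⟩ ⟨⟨h1, h2⟩, h3, h4⟩
        have k1 : 0 ≤ (1 - 2*aP) * p1 := mul_nonneg hd.le h1
        have k2 : (1 - 2*aP) * p1 ≤ 1 - 2*aP := mul_le_of_le_one_right hd.le h2
        have k3 : 0 ≤ (1 - 2*aP) * p2 := mul_nonneg hd.le h3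
        have k4 : (1 - 2*aP) * p2 ≤ 1 - 2*aP := mul_le_of_le_one_right hd.le h4
        exact ⟨⟨show (0:ℝ) ≤ aP + (1 - 2*aP)*p1 by linarith,
          show aP + (1 - 2*aP)*p1 ≤ 1 by linarith⟩,
          ⟨show (0:ℝ) ≤ aP + (1 - 2*aP)*p2 by linarith,
          show aP + (1 - 2*aP)*p2 ≤ 1 by linarith⟩⟩
      have hres : μ.restrict
          ((fun p : ℝ × ℝ => (aP + (1 - 2*aP)*p.1, aP + (1 - 2*aP)*p.2)) ⁻¹' Q) =
          μ.restrict Q := by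
        apply Measure.restrict_congr_set
        rw [ae_eq_set]
        constructor
        · exact measure_mono_null (fun p hp => hp.2) (cm_compl hμ hC11)
        · rw [diff_eq_empty.mpr hQsub]; exact measure_empty
      rw [hres]
      have hcongr : ∀ p ∈ Q,
          B (aP + (1 - 2*aP)*p.1) (aP + (1 - 2*aP)*p.2) = aP + (1 - 2*aP) * C p.1 p.2 := by
        rintro ⟨p1, p2⟩ ⟨⟨h1, h2⟩, h3, h4⟩
        have k1 : 0 ≤ (1 - 2*aP) * p1 := mul_nonneg hd.le h1
        have k2 : (1 - 2*aP) * p1 ≤ 1 - 2*aP := mul_le_of_le_one_right hd.le h2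
        have k3 : 0 ≤ (1 - 2*aP) * p2 := mul_nonneg hd.le h3
        have k4 : (1 - 2*aP) * p2 ≤ 1 - 2*aP := mul_le_of_le_one_right hd.le h4
        have hm1 : aP + (1 - 2*aP)*p1 ∈ Icc aP (1-aP) := ⟨by linarith, by linarith⟩
        have hm2 : aP + (1 - 2*aP)*p2 ∈ Icc aP (1-aP) := ⟨by linarith, by linarith⟩
        rw [BS hB hm1 hm2]
        congr 3 <;> rw [div_eq_iff hd.ne'] <;> ring
      rw [setIntegral_congr_fun hQm (fun p hp => hcongr p hp)]
      have hiC : Integrable (fun p : ℝ × ℝ => C p.1 p.2) (μ.restrict Q) :=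
        hcontC.integrableOn_compact hQc
      rw [integral_add (integrable_const aP) (hiC.const_mul (1 - 2*aP)),
        setIntegral_const, measureReal_def, cm_Q_one hμ hC11, ENNReal.toReal_one, one_smul,
        integral_const_mul, ENNReal.toReal_ofReal hd.le, smul_eq_mul]
  -- assemble
  have hνeq : ν = nu0 aP μ := nu_eq_nu0 ⟨ha0, ha2⟩ hC hB hν hμ
  simp only [kendallTauInt]
  rw [hνeq, ← hQdef, nu0, Measure.restrict_add,
    integral_add_measure (hint1.add_measure hint2) hint3, Measure.restrict_add,
    integral_add_measure hint1 hint2, e1, e2, e3]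
  ring
end

section
/- For any copula C with copula measure μ, Kendall's tau τ(C) = 4·∫_{[0,1]²} C dμ − 1, Spearman's footrule φ(C), and Gini's gamma γ(C) satisfy max{ (4/3)·φ(C) − 1/3, −(2/3)·φ(C) + γ(C) − 1/3 } ≤ τ(C) ≤ min{ (2/3)·φ(C) + 1/3, −(4/3)·φ(C) + 2·γ(C) + 1/3 }. -/
open MeasureTheory Set

namespace KT

variable {C : ℝ → ℝ → ℝ}

lemma mono2 (hC : IsCopula C) {u v₁ v₂ : ℝ} (hu : u ∈ Icc (0:ℝ) 1)
    (h0 : 0 ≤ v₁) (h : v₁ ≤ v₂) (h1 : v₂ ≤ 1) : C u v₁ ≤ C u v₂ := by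
  have h2 := hC.2.2.2.2 0 u v₁ v₂ le_rfl hu.1 hu.2 h0 h h1
  have e1 := hC.1 v₁ ⟨h0, h.trans h1⟩
  have e2 := hC.1 v₂ ⟨h0.trans h, h1⟩
  linarith

lemma mono1 (hC : IsCopula C) {u₁ u₂ v : ℝ} (h0 : 0 ≤ u₁) (h : u₁ ≤ u₂) (h1 : u₂ ≤ 1)
    (hv : v ∈ Icc (0:ℝ) 1) : C u₁ v ≤ C u₂ v := by
  have h2 := hC.2.2.2.2 u₁ u₂ 0 v h0 h h1 le_rfl hv.1 hv.2
  have e1 := hC.2.1 u₁ ⟨h0, h.trans h1⟩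
  have e2 := hC.2.1 u₂ ⟨h0.trans h, h1⟩
  linarith

lemma lip1 (hC : IsCopula C) {u₁ u₂ v : ℝ} (h0 : 0 ≤ u₁) (h : u₁ ≤ u₂) (h1 : u₂ ≤ 1)
    (hv : v ∈ Icc (0:ℝ) 1) : C u₂ v - C u₁ v ≤ u₂ - u₁ := by
  have h2 := hC.2.2.2.2 u₁ u₂ v 1 h0 h h1 hv.1 hv.2 le_rfl
  have e1 := hC.2.2.1 u₁ ⟨h0, h.trans h1⟩
  have e2 := hC.2.2.1 u₂ ⟨h0.trans h, h1⟩
  linarith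

lemma lip2 (hC : IsCopula C) {u v₁ v₂ : ℝ} (hu : u ∈ Icc (0:ℝ) 1)
    (h0 : 0 ≤ v₁) (h : v₁ ≤ v₂) (h1 : v₂ ≤ 1) : C u v₂ - C u v₁ ≤ v₂ - v₁ := by
  have h2 := hC.2.2.2.2 u 1 v₁ v₂ hu.1 hu.2 le_rfl h0 h h1
  have e1 := hC.2.2.2.1 v₁ ⟨h0, h.trans h1⟩
  have e2 := hC.2.2.2.1 v₂ ⟨h0.trans h, h1⟩
  linarith

lemma nonneg (hC : IsCopula C) {u v : ℝ} (hu : u ∈ Icc (0:ℝ) 1) (hv : v ∈ Icc (0:ℝ) 1) :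
    0 ≤ C u v := by
  have := mono1 hC le_rfl hu.1 hu.2 hv
  have e := hC.1 v hv
  linarith

lemma le_fst (hC : IsCopula C) {u v : ℝ} (hu : u ∈ Icc (0:ℝ) 1) (hv : v ∈ Icc (0:ℝ) 1) :
    C u v ≤ u := by
  have := lip1 hC le_rfl hu.1 hu.2 hv
  have e := hC.1 v hv
  linarith

lemma le_snd (hC : IsCopula C) {u v : ℝ} (hu : u ∈ Icc (0:ℝ) 1) (hv : v ∈ Icc (0:ℝ) 1) :
    C u v ≤ v := by
  have := lip2 hC hu le_rfl hv.1 hv.2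
  have e := hC.2.1 u hu
  linarith

lemma ge_frechet (hC : IsCopula C) {u v : ℝ} (hu : u ∈ Icc (0:ℝ) 1) (hv : v ∈ Icc (0:ℝ) 1) :
    u + v - 1 ≤ C u v := by
  have h2 := hC.2.2.2.2 u 1 v 1 hu.1 hu.2 le_rfl hv.1 hv.2 le_rfl
  have e1 := hC.2.2.1 u hu
  have e2 := hC.2.2.2.1 v hv
  have e3 := hC.2.2.1 1 ⟨zero_le_one, le_rfl⟩
  linarith

lemma abs_le_one (hC : IsCopula C) {u v : ℝ} (hu : u ∈ Icc (0:ℝ) 1) (hv : v ∈ Icc (0:ℝ) 1) :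
    |C u v| ≤ 1 := by
  rw [abs_le]
  constructor
  · have := nonneg hC hu hv; linarith
  · have := le_fst hC hu hv; linarith [hu.2]

/-- joint Lipschitz estimate on the square -/
lemma lip (hC : IsCopula C) {p q : ℝ × ℝ} (hp : p ∈ Icc (0:ℝ) 1 ×ˢ Icc (0:ℝ) 1)
    (hq : q ∈ Icc (0:ℝ) 1 ×ˢ Icc (0:ℝ) 1) :
    |C p.1 p.2 - C q.1 q.2| ≤ |p.1 - q.1| + |p.2 - q.2| := by
  obtain ⟨hp1, hp2⟩ := hp
  obtain ⟨hq1, hq2⟩ := hq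
  have h1 : |C p.1 p.2 - C q.1 p.2| ≤ |p.1 - q.1| := by
    rcases le_total p.1 q.1 with h | h
    · have l := lip1 hC hp1.1 h hq1.2 hp2
      have m := mono1 hC hp1.1 h hq1.2 hp2
      rw [abs_sub_comm, abs_of_nonneg (by linarith), abs_sub_comm, abs_of_nonneg (by linarith)]
      linarith
    · have l := lip1 hC hq1.1 h hp1.2 hp2
      have m := mono1 hC hq1.1 h hp1.2 hp2
      rw [abs_of_nonneg (by linarith), abs_of_nonneg (by linarith)]
      linarith
  have h2 : |C q.1 p.2 - C q.1 q.2| ≤ |p.2 - q.2| := by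
    rcases le_total p.2 q.2 with h | h
    · have l := lip2 hC hq1 hp2.1 h hq2.2
      have m := mono2 hC hq1 hp2.1 h hq2.2
      rw [abs_sub_comm, abs_of_nonneg (by linarith), abs_sub_comm, abs_of_nonneg (by linarith)]
      linarith
    · have l := lip2 hC hq1 hq2.1 h hp2.2
      have m := mono2 hC hq1 hq2.1 h hp2.2
      rw [abs_of_nonneg (by linarith), abs_of_nonneg (by linarith)]
      linarith
  calc |C p.1 p.2 - C q.1 q.2| ≤ |C p.1 p.2 - C q.1 p.2| + |C q.1 p.2 - C q.1 q.2| :=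
        abs_sub_le _ _ _
    _ ≤ |p.1 - q.1| + |p.2 - q.2| := add_le_add h1 h2

lemma contOn (hC : IsCopula C) :
    ContinuousOn (fun p : ℝ × ℝ => C p.1 p.2) (Icc (0:ℝ) 1 ×ˢ Icc (0:ℝ) 1) := by
  have : LipschitzOnWith 2 (fun p : ℝ × ℝ => C p.1 p.2) (Icc (0:ℝ) 1 ×ˢ Icc (0:ℝ) 1) := by
    rw [lipschitzOnWith_iff_dist_le_mul]
    intro p hp q hq
    have := lip hC hp hq
    have d1 : |p.1 - q.1| ≤ dist p q := by
      rw [Prod.dist_eq]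
      exact le_trans (by rw [Real.dist_eq]) (le_max_left _ _)
    have d2 : |p.2 - q.2| ≤ dist p q := by
      rw [Prod.dist_eq]
      exact le_trans (by rw [Real.dist_eq]) (le_max_right _ _)
    rw [Real.dist_eq]
    push_cast
    linarith
  exact this.continuousOn

lemma contD (hC : IsCopula C) : ContinuousOn (fun t : ℝ => C t t) (Icc (0:ℝ) 1) := by
  have : ContinuousOn (fun t : ℝ => ((t, t) : ℝ × ℝ)) (Icc (0:ℝ) 1) :=
    (continuous_id.prodMk continuous_id).continuousOn
  exact (contOn hC).comp this (fun t ht => ⟨ht, ht⟩)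

lemma contd (hC : IsCopula C) : ContinuousOn (fun t : ℝ => C t (1 - t)) (Icc (0:ℝ) 1) := by
  have : ContinuousOn (fun t : ℝ => ((t, 1 - t) : ℝ × ℝ)) (Icc (0:ℝ) 1) :=
    (continuous_id.prodMk (continuous_const.sub continuous_id)).continuousOn
  exact (contOn hC).comp this (fun t ht => ⟨ht, ⟨by simp [ht.2], by simp [ht.1]⟩⟩)

end KT

namespace KT

variable {C : ℝ → ℝ → ℝ} {μ : Measure (ℝ × ℝ)}

/-- the closed unit square -/
abbrev sq : Set (ℝ × ℝ) := Icc (0:ℝ) 1 ×ˢ Icc (0:ℝ) 1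

lemma sq_meas : MeasurableSet sq := measurableSet_Icc.prod measurableSet_Icc

lemma C11 (hC : IsCopula C) : C 1 1 = 1 := hC.2.2.1 1 ⟨zero_le_one, le_rfl⟩

lemma restrict_rect (hμ : IsCopulaMeasure C μ) {u v : ℝ}
    (hu : u ∈ Icc (0:ℝ) 1) (hv : v ∈ Icc (0:ℝ) 1) :
    μ.restrict sq (Icc 0 u ×ˢ Icc 0 v) = ENNReal.ofReal (C u v) := by
  rw [Measure.restrict_apply (measurableSet_Icc.prod measurableSet_Icc)]
  rw [Set.inter_eq_self_of_subset_left
    (Set.prod_mono (Icc_subset_Icc le_rfl hu.2) (Icc_subset_Icc le_rfl hv.2))]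
  exact hμ.2 u hu v hv

lemma nu_prob (hC : IsCopula C) (hμ : IsCopulaMeasure C μ) :
    IsProbabilityMeasure (μ.restrict sq) := by
  constructor
  rw [Measure.restrict_apply_univ]
  have h := hμ.2 1 ⟨zero_le_one, le_rfl⟩ 1 ⟨zero_le_one, le_rfl⟩
  rw [show (Icc (0:ℝ) 1 ×ˢ Icc (0:ℝ) 1) = sq from rfl] at h
  rw [h, C11 hC, ENNReal.ofReal_one]

lemma set_m1 {t : ℝ} (ht : t ∈ Icc (0:ℝ) 1) :
    {p : ℝ × ℝ | p.1 ≤ t} ∩ sq = Icc 0 t ×ˢ Icc 0 1 := by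
  ext p
  simp only [mem_inter_iff, mem_setOf_eq, mem_prod, mem_Icc]
  constructor
  · rintro ⟨h, ⟨h1, _⟩, h2⟩; exact ⟨⟨h1, h⟩, h2⟩
  · rintro ⟨⟨h1, h⟩, h2⟩; exact ⟨h, ⟨⟨h1, h.trans ht.2⟩, h2⟩⟩

lemma set_m2 {t : ℝ} (ht : t ∈ Icc (0:ℝ) 1) :
    {p : ℝ × ℝ | p.2 ≤ t} ∩ sq = Icc 0 1 ×ˢ Icc 0 t := by
  ext p
  simp only [mem_inter_iff, mem_setOf_eq, mem_prod, mem_Icc]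
  constructor
  · rintro ⟨h, h1, h2, _⟩; exact ⟨h1, h2, h⟩
  · rintro ⟨h1, h2, h⟩; exact ⟨h, h1, h2, h.trans ht.2⟩

lemma set_m12 {s t : ℝ} (hs : s ∈ Icc (0:ℝ) 1) (ht : t ∈ Icc (0:ℝ) 1) :
    {p : ℝ × ℝ | p.1 ≤ s ∧ p.2 ≤ t} ∩ sq = Icc 0 s ×ˢ Icc 0 t := by
  ext p
  simp only [mem_inter_iff, mem_setOf_eq, mem_prod, mem_Icc]
  constructor
  · rintro ⟨⟨ha, hb⟩, ⟨h1, _⟩, ⟨h2, _⟩⟩; exact ⟨⟨h1, ha⟩, ⟨h2, hb⟩⟩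
  · rintro ⟨⟨h1, ha⟩, ⟨h2, hb⟩⟩
    exact ⟨⟨ha, hb⟩, ⟨⟨h1, ha.trans hs.2⟩, ⟨h2, hb.trans ht.2⟩⟩⟩

lemma m1 (hC : IsCopula C) (hμ : IsCopulaMeasure C μ) {t : ℝ} (ht : t ∈ Icc (0:ℝ) 1) :
    μ.restrict sq {p : ℝ × ℝ | p.1 ≤ t} = ENNReal.ofReal t := by
  rw [Measure.restrict_apply (measurableSet_le measurable_fst measurable_const), set_m1 ht,
    hμ.2 t ht 1 ⟨zero_le_one, le_rfl⟩, hC.2.2.1 t ht]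

lemma m2 (hC : IsCopula C) (hμ : IsCopulaMeasure C μ) {t : ℝ} (ht : t ∈ Icc (0:ℝ) 1) :
    μ.restrict sq {p : ℝ × ℝ | p.2 ≤ t} = ENNReal.ofReal t := by
  rw [Measure.restrict_apply (measurableSet_le measurable_snd measurable_const), set_m2 ht,
    hμ.2 1 ⟨zero_le_one, le_rfl⟩ t ht, hC.2.2.2.1 t ht]

lemma m12 (hμ : IsCopulaMeasure C μ) {s t : ℝ} (hs : s ∈ Icc (0:ℝ) 1) (ht : t ∈ Icc (0:ℝ) 1) :
    μ.restrict sq {p : ℝ × ℝ | p.1 ≤ s ∧ p.2 ≤ t} = ENNReal.ofReal (C s t) := by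
  rw [Measure.restrict_apply (show MeasurableSet {p : ℝ × ℝ | p.1 ≤ s ∧ p.2 ≤ t} from
    (measurableSet_le measurable_fst measurable_const).inter
      (measurableSet_le measurable_snd measurable_const)), set_m12 hs ht]
  exact hμ.2 s hs t ht

lemma map_fst (hC : IsCopula C) (hμ : IsCopulaMeasure C μ) :
    (μ.restrict sq).map Prod.fst = volume.restrict (Icc (0:ℝ) 1) := by
  haveI := hμ.1
  haveI := nu_prob hC hμ
  haveI : IsProbabilityMeasure ((μ.restrict sq).map Prod.fst) :=
    Measure.isProbabilityMeasure_map measurable_fst.aemeasurable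
  refine Measure.ext_of_Iic _ _ (fun a => ?_)
  rw [Measure.map_apply measurable_fst measurableSet_Iic,
    Measure.restrict_apply measurableSet_Iic]
  have hpre : Prod.fst ⁻¹' Iic a = {p : ℝ × ℝ | p.1 ≤ a} := rfl
  rcases lt_or_ge a 0 with ha | ha
  · have h1 : {p : ℝ × ℝ | p.1 ≤ a} ∩ sq = ∅ := by
      refine eq_empty_iff_forall_notMem.2 (fun p hp => ?_)
      have h0 : (0:ℝ) ≤ p.1 := hp.2.1.1
      have hA : p.1 ≤ a := hp.1
      linarith
    have h2 : Iic a ∩ Icc (0:ℝ) 1 = ∅ := by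
      refine eq_empty_iff_forall_notMem.2 (fun x hx => ?_)
      have h0 : (0:ℝ) ≤ x := hx.2.1
      have hA : x ≤ a := hx.1
      linarith
    rw [hpre, Measure.restrict_apply (measurableSet_le measurable_fst measurable_const), h1, h2,
      measure_empty, measure_empty]
  rcases le_or_gt a 1 with ha1 | ha1
  · rw [hpre, m1 hC hμ ⟨ha, ha1⟩]
    have : Iic a ∩ Icc (0:ℝ) 1 = Icc 0 a := by
      ext x; simp only [mem_inter_iff, mem_Iic, mem_Icc]
      constructor
      · rintro ⟨h, h0, _⟩; exact ⟨h0, h⟩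
      · rintro ⟨h0, h⟩; exact ⟨h, h0, h.trans ha1⟩
    rw [this, Real.volume_Icc]; norm_num
  · have h1 : {p : ℝ × ℝ | p.1 ≤ a} ∩ sq = sq := by
      apply inter_eq_self_of_subset_right
      intro p hp; exact hp.1.2.trans ha1.le
    have h2 : Iic a ∩ Icc (0:ℝ) 1 = Icc 0 1 := by
      apply inter_eq_self_of_subset_right
      intro x hx; exact hx.2.trans ha1.le
    rw [hpre, Measure.restrict_apply (measurableSet_le measurable_fst measurable_const), h1, h2,
      Real.volume_Icc]
    have := (nu_prob hC hμ).measure_univ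
    rw [Measure.restrict_apply_univ] at this
    rw [this]; norm_num

lemma map_snd (hC : IsCopula C) (hμ : IsCopulaMeasure C μ) :
    (μ.restrict sq).map Prod.snd = volume.restrict (Icc (0:ℝ) 1) := by
  haveI := hμ.1
  haveI := nu_prob hC hμ
  haveI : IsProbabilityMeasure ((μ.restrict sq).map Prod.snd) :=
    Measure.isProbabilityMeasure_map measurable_snd.aemeasurable
  refine Measure.ext_of_Iic _ _ (fun a => ?_)
  rw [Measure.map_apply measurable_snd measurableSet_Iic,
    Measure.restrict_apply measurableSet_Iic]
  have hpre : Prod.snd ⁻¹' Iic a = {p : ℝ × ℝ | p.2 ≤ a} := rfl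
  rcases lt_or_ge a 0 with ha | ha
  · have h1 : {p : ℝ × ℝ | p.2 ≤ a} ∩ sq = ∅ := by
      refine eq_empty_iff_forall_notMem.2 (fun p hp => ?_)
      have h0 : (0:ℝ) ≤ p.2 := hp.2.2.1
      have hA : p.2 ≤ a := hp.1
      linarith
    have h2 : Iic a ∩ Icc (0:ℝ) 1 = ∅ := by
      refine eq_empty_iff_forall_notMem.2 (fun x hx => ?_)
      have h0 : (0:ℝ) ≤ x := hx.2.1
      have hA : x ≤ a := hx.1
      linarith
    rw [hpre, Measure.restrict_apply (measurableSet_le measurable_snd measurable_const), h1, h2,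
      measure_empty, measure_empty]
  rcases le_or_gt a 1 with ha1 | ha1
  · rw [hpre, m2 hC hμ ⟨ha, ha1⟩]
    have : Iic a ∩ Icc (0:ℝ) 1 = Icc 0 a := by
      ext x; simp only [mem_inter_iff, mem_Iic, mem_Icc]
      constructor
      · rintro ⟨h, h0, _⟩; exact ⟨h0, h⟩
      · rintro ⟨h0, h⟩; exact ⟨h, h0, h.trans ha1⟩
    rw [this, Real.volume_Icc]; norm_num
  · have h1 : {p : ℝ × ℝ | p.2 ≤ a} ∩ sq = sq := by
      apply inter_eq_self_of_subset_right
      intro p hp; exact hp.2.2.trans ha1.le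
    have h2 : Iic a ∩ Icc (0:ℝ) 1 = Icc 0 1 := by
      apply inter_eq_self_of_subset_right
      intro x hx; exact hx.2.trans ha1.le
    rw [hpre, Measure.restrict_apply (measurableSet_le measurable_snd measurable_const), h1, h2,
      Real.volume_Icc]
    have := (nu_prob hC hμ).measure_univ
    rw [Measure.restrict_apply_univ] at this
    rw [this]; norm_num

lemma integral_fst (hC : IsCopula C) (hμ : IsCopulaMeasure C μ) {g : ℝ → ℝ}
    (hg : ContinuousOn g (Icc (0:ℝ) 1)) :
    ∫ p, g p.1 ∂(μ.restrict sq) = ∫ t in Icc (0:ℝ) 1, g t := by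
  have hgm : AEStronglyMeasurable g ((μ.restrict sq).map Prod.fst) := by
    rw [map_fst hC hμ]
    exact hg.aestronglyMeasurable measurableSet_Icc
  rw [← integral_map measurable_fst.aemeasurable hgm, map_fst hC hμ]

lemma integral_snd (hC : IsCopula C) (hμ : IsCopulaMeasure C μ) {g : ℝ → ℝ}
    (hg : ContinuousOn g (Icc (0:ℝ) 1)) :
    ∫ p, g p.2 ∂(μ.restrict sq) = ∫ t in Icc (0:ℝ) 1, g t := by
  have hgm : AEStronglyMeasurable g ((μ.restrict sq).map Prod.snd) := by
    rw [map_snd hC hμ]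
    exact hg.aestronglyMeasurable measurableSet_Icc
  rw [← integral_map measurable_snd.aemeasurable hgm, map_snd hC hμ]

end KT

namespace KT

variable {C : ℝ → ℝ → ℝ} {μ : Measure (ℝ × ℝ)}

lemma integrable_bdd {ν : Measure (ℝ × ℝ)} [IsFiniteMeasure ν] {f : ℝ × ℝ → ℝ} {M : ℝ}
    (hm : AEStronglyMeasurable f ν) (hb : ∀ᵐ p ∂ν, |f p| ≤ M) : Integrable f ν :=
  ⟨hm, HasFiniteIntegral.of_bounded (C := M) (by simpa [Real.norm_eq_abs] using hb)⟩

lemma ae_sq : ∀ᵐ p ∂(μ.restrict sq), p ∈ sq := ae_restrict_mem sq_meas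

lemma intC (hC : IsCopula C) (hμ : IsCopulaMeasure C μ) :
    Integrable (fun p : ℝ × ℝ => C p.1 p.2) (μ.restrict sq) := by
  haveI := nu_prob hC hμ
  refine integrable_bdd ((contOn hC).aestronglyMeasurable sq_meas) (M := 1) ?_
  filter_upwards [ae_sq] with p hp
  exact abs_le_one hC hp.1 hp.2

lemma intD1 (hC : IsCopula C) (hμ : IsCopulaMeasure C μ) :
    Integrable (fun p : ℝ × ℝ => C p.1 p.1) (μ.restrict sq) := by
  haveI := nu_prob hC hμ
  have hcont : ContinuousOn (fun p : ℝ × ℝ => C p.1 p.1) sq :=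
    (contD hC).comp continuous_fst.continuousOn (fun p hp => hp.1)
  refine integrable_bdd (hcont.aestronglyMeasurable sq_meas) (M := 1) ?_
  filter_upwards [ae_sq] with p hp
  exact abs_le_one hC hp.1 hp.1

lemma intD2 (hC : IsCopula C) (hμ : IsCopulaMeasure C μ) :
    Integrable (fun p : ℝ × ℝ => C p.2 p.2) (μ.restrict sq) := by
  haveI := nu_prob hC hμ
  have hcont : ContinuousOn (fun p : ℝ × ℝ => C p.2 p.2) sq :=
    (contD hC).comp continuous_snd.continuousOn (fun p hp => hp.2)
  refine integrable_bdd (hcont.aestronglyMeasurable sq_meas) (M := 1) ?_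
  filter_upwards [ae_sq] with p hp
  exact abs_le_one hC hp.2 hp.2

lemma intd (hC : IsCopula C) (hμ : IsCopulaMeasure C μ) :
    Integrable (fun p : ℝ × ℝ => C p.1 (1 - p.1)) (μ.restrict sq) := by
  haveI := nu_prob hC hμ
  have hcont : ContinuousOn (fun p : ℝ × ℝ => C p.1 (1 - p.1)) sq :=
    (contd hC).comp continuous_fst.continuousOn (fun p hp => hp.1)
  refine integrable_bdd (hcont.aestronglyMeasurable sq_meas) (M := 1) ?_
  filter_upwards [ae_sq] with p hp
  exact abs_le_one hC hp.1 ⟨by linarith [hp.1.2], by linarith [hp.1.1]⟩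

lemma int_fst (hC : IsCopula C) (hμ : IsCopulaMeasure C μ) :
    Integrable (fun p : ℝ × ℝ => p.1) (μ.restrict sq) := by
  haveI := nu_prob hC hμ
  refine integrable_bdd continuous_fst.aestronglyMeasurable (M := 1) ?_
  filter_upwards [ae_sq] with p hp
  rw [abs_le]; exact ⟨by linarith [hp.1.1], hp.1.2⟩

lemma int_snd (hC : IsCopula C) (hμ : IsCopulaMeasure C μ) :
    Integrable (fun p : ℝ × ℝ => p.2) (μ.restrict sq) := by
  haveI := nu_prob hC hμ
  refine integrable_bdd continuous_snd.aestronglyMeasurable (M := 1) ?_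
  filter_upwards [ae_sq] with p hp
  rw [abs_le]; exact ⟨by linarith [hp.2.1], hp.2.2⟩

lemma int_abs (hC : IsCopula C) (hμ : IsCopulaMeasure C μ) :
    Integrable (fun p : ℝ × ℝ => |p.1 - p.2|) (μ.restrict sq) := by
  haveI := nu_prob hC hμ
  refine integrable_bdd ((continuous_fst.sub continuous_snd).abs.aestronglyMeasurable)
    (M := 1) ?_
  filter_upwards [ae_sq] with p hp
  rw [abs_abs, abs_le]
  constructor <;> [linarith [hp.1.1, hp.2.2]; linarith [hp.1.2, hp.2.1]]

lemma int_maxneg (hC : IsCopula C) (hμ : IsCopulaMeasure C μ) :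
    Integrable (fun p : ℝ × ℝ => max (1 - p.1 - p.2) 0) (μ.restrict sq) := by
  haveI := nu_prob hC hμ
  refine integrable_bdd (((continuous_const.sub continuous_fst).sub
    continuous_snd).max continuous_const).aestronglyMeasurable (M := 1) ?_
  filter_upwards [ae_sq] with p hp
  rw [abs_le]
  constructor
  · linarith [le_max_right (1 - p.1 - p.2) (0:ℝ)]
  · rw [max_le_iff]; constructor <;> [linarith [hp.1.1, hp.2.1]; norm_num]

lemma int_maxpos (hC : IsCopula C) (hμ : IsCopulaMeasure C μ) :
    Integrable (fun p : ℝ × ℝ => max (p.1 + p.2 - 1) 0) (μ.restrict sq) := by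
  haveI := nu_prob hC hμ
  refine integrable_bdd (((continuous_fst.add continuous_snd).sub
    continuous_const).max continuous_const).aestronglyMeasurable (M := 1) ?_
  filter_upwards [ae_sq] with p hp
  rw [abs_le]
  constructor
  · linarith [le_max_right (p.1 + p.2 - 1) (0:ℝ)]
  · rw [max_le_iff]; constructor <;> [linarith [hp.1.2, hp.2.2]; norm_num]

lemma int_min (hC : IsCopula C) (hμ : IsCopulaMeasure C μ) :
    Integrable (fun p : ℝ × ℝ => min p.1 p.2) (μ.restrict sq) := by
  haveI := nu_prob hC hμ
  refine integrable_bdd (continuous_fst.min continuous_snd).aestronglyMeasurable (M := 1) ?_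
  filter_upwards [ae_sq] with p hp
  rw [abs_le]
  constructor
  · rw [le_min_iff]; constructor <;> [linarith [hp.1.1]; linarith [hp.2.1]]
  · exact (min_le_left _ _).trans hp.1.2

lemma ofReal_max_zero (x : ℝ) : ENNReal.ofReal (max x 0) = ENNReal.ofReal x := by
  rcases le_total x 0 with h | h
  · rw [max_eq_right h, ENNReal.ofReal_zero, eq_comm, ENNReal.ofReal_eq_zero]; exact h
  · rw [max_eq_left h]

end KT

namespace KT

variable {C : ℝ → ℝ → ℝ} {μ : Measure (ℝ × ℝ)}

/-- Fubini identity: ∫ |u−v| dν = ∫₀¹ (2t − 2C(t,t)) dt. -/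
lemma integral_abs_sub (hC : IsCopula C) (hμ : IsCopulaMeasure C μ) :
    ∫ p, |p.1 - p.2| ∂(μ.restrict sq) = ∫ t in Icc (0:ℝ) 1, (2 * t - 2 * C t t) := by
  haveI := hμ.1
  haveI := nu_prob hC hμ
  set ν := μ.restrict sq with hν
  set lam := volume.restrict (Icc (0:ℝ) 1) with hlam
  set T : Set ((ℝ × ℝ) × ℝ) :=
    {q | (q.1.1 ≤ q.2 ∧ q.2 < q.1.2) ∨ (q.1.2 ≤ q.2 ∧ q.2 < q.1.1)} with hT
  have hTm : MeasurableSet T := by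
    have : T = ({q : (ℝ × ℝ) × ℝ | q.1.1 ≤ q.2} ∩ {q | q.2 < q.1.2}) ∪
        ({q : (ℝ × ℝ) × ℝ | q.1.2 ≤ q.2} ∩ {q | q.2 < q.1.1}) := by
      ext q; simp only [hT, mem_setOf_eq, mem_union, mem_inter_iff]
    rw [this]
    exact (((measurableSet_le (measurable_fst.comp measurable_fst) measurable_snd).inter
        (measurableSet_lt measurable_snd (measurable_snd.comp measurable_fst)))).union
      (((measurableSet_le (measurable_snd.comp measurable_fst) measurable_snd).inter
        (measurableSet_lt measurable_snd (measurable_fst.comp measurable_fst))))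
  have h1 : ν.prod lam T = ∫⁻ p, lam (Prod.mk p ⁻¹' T) ∂ν := Measure.prod_apply hTm
  have h2 : ν.prod lam T = ∫⁻ t, ν ((fun p => (p, t)) ⁻¹' T) ∂lam :=
    Measure.prod_apply_symm hTm
  have hp_side : ∫⁻ p, lam (Prod.mk p ⁻¹' T) ∂ν = ∫⁻ p, ENNReal.ofReal |p.1 - p.2| ∂ν := by
    refine lintegral_congr_ae ?_
    filter_upwards [ae_sq] with p hp
    have hpre : Prod.mk p ⁻¹' T = Ico p.1 p.2 ∪ Ico p.2 p.1 := by
      ext t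
      simp only [hT, mem_preimage, mem_setOf_eq, mem_union, mem_Ico]
    rw [hpre]
    rcases le_total p.1 p.2 with h | h
    · have hss : Ico p.1 p.2 ⊆ Icc (0:ℝ) 1 := fun t ht =>
        mem_Icc.mpr ⟨hp.1.1.trans (mem_Ico.1 ht).1, ((mem_Ico.1 ht).2.le).trans hp.2.2⟩
      rw [Ico_eq_empty (not_lt.2 h), union_empty, hlam,
        Measure.restrict_apply measurableSet_Ico, inter_eq_self_of_subset_left hss,
        Real.volume_Ico, abs_sub_comm, abs_of_nonneg (by linarith)]
    · have hss : Ico p.2 p.1 ⊆ Icc (0:ℝ) 1 := fun t ht =>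
        mem_Icc.mpr ⟨hp.2.1.trans (mem_Ico.1 ht).1, ((mem_Ico.1 ht).2.le).trans hp.1.2⟩
      rw [Ico_eq_empty (not_lt.2 h), empty_union, hlam,
        Measure.restrict_apply measurableSet_Ico, inter_eq_self_of_subset_left hss,
        Real.volume_Ico, abs_of_nonneg (by linarith)]
  have ht_side : ∫⁻ t, ν ((fun p => (p, t)) ⁻¹' T) ∂lam
      = ∫⁻ t, ENNReal.ofReal (2 * t - 2 * C t t) ∂lam := by
    refine lintegral_congr_ae ?_
    filter_upwards [ae_restrict_mem measurableSet_Icc] with t ht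
    have hA : MeasurableSet {p : ℝ × ℝ | p.1 ≤ t} :=
      measurableSet_le measurable_fst measurable_const
    have hB : MeasurableSet {p : ℝ × ℝ | p.2 ≤ t} :=
      measurableSet_le measurable_snd measurable_const
    have hpre : (fun p => (p, t)) ⁻¹' T =
        ({p : ℝ × ℝ | p.1 ≤ t} \ {p | p.2 ≤ t}) ∪ ({p : ℝ × ℝ | p.2 ≤ t} \ {p | p.1 ≤ t}) := by
      ext p
      simp only [hT, mem_preimage, mem_setOf_eq, mem_union, mem_diff, not_le]
    have hsub : {p : ℝ × ℝ | p.1 ≤ t} ∩ {p | p.2 ≤ t} = {p : ℝ × ℝ | p.1 ≤ t ∧ p.2 ≤ t} := by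
      ext p; simp only [mem_inter_iff, mem_setOf_eq]
    have hCt : (0:ℝ) ≤ C t t := nonneg hC ht ht
    have hCt' : C t t ≤ t := le_fst hC ht ht
    have hd1 : ν ({p : ℝ × ℝ | p.1 ≤ t} \ {p | p.2 ≤ t}) = ENNReal.ofReal (t - C t t) := by
      rw [← Set.diff_self_inter, measure_diff Set.inter_subset_left
        ((hA.inter hB).nullMeasurableSet) (by rw [hsub, m12 hμ ht ht]; exact ENNReal.ofReal_ne_top),
        hsub, m12 hμ ht ht, m1 hC hμ ht, ← ENNReal.ofReal_sub _ hCt]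
    have hd2 : ν ({p : ℝ × ℝ | p.2 ≤ t} \ {p | p.1 ≤ t}) = ENNReal.ofReal (t - C t t) := by
      have hsub2 : {p : ℝ × ℝ | p.2 ≤ t} ∩ {p | p.1 ≤ t} = {p : ℝ × ℝ | p.1 ≤ t ∧ p.2 ≤ t} := by
        ext p; simp only [mem_inter_iff, mem_setOf_eq]; tauto
      rw [← Set.diff_self_inter, measure_diff Set.inter_subset_left
        ((hB.inter hA).nullMeasurableSet)
        (by rw [hsub2, m12 hμ ht ht]; exact ENNReal.ofReal_ne_top),
        hsub2, m12 hμ ht ht, m2 hC hμ ht, ← ENNReal.ofReal_sub _ hCt]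
    rw [hpre, measure_union (disjoint_sdiff_sdiff) (hB.diff hA), hd1, hd2,
      ← ENNReal.ofReal_add (by linarith) (by linarith)]
    congr 1; ring
  have key : ∫⁻ p, ENNReal.ofReal |p.1 - p.2| ∂ν
      = ∫⁻ t, ENNReal.ofReal (2 * t - 2 * C t t) ∂lam := by
    rw [← hp_side, ← h1, h2, ht_side]
  have lhs : ENNReal.ofReal (∫ p, |p.1 - p.2| ∂ν) = ∫⁻ p, ENNReal.ofReal |p.1 - p.2| ∂ν :=
    ofReal_integral_eq_lintegral_ofReal (int_abs hC hμ)
      (Filter.Eventually.of_forall fun p => abs_nonneg _)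
  have hint2 : Integrable (fun t => 2 * t - 2 * C t t) lam := by
    rw [hlam]
    exact ContinuousOn.integrableOn_Icc
      (((continuous_const.mul continuous_id).continuousOn).sub
        (continuousOn_const.mul (contD hC)))
  have rhs : ENNReal.ofReal (∫ t, (2 * t - 2 * C t t) ∂lam)
      = ∫⁻ t, ENNReal.ofReal (2 * t - 2 * C t t) ∂lam := by
    refine ofReal_integral_eq_lintegral_ofReal hint2 ?_
    rw [hlam]
    filter_upwards [ae_restrict_mem measurableSet_Icc] with t ht
    have := le_fst hC ht ht
    simp only [Pi.zero_apply]; linarith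
  have : ENNReal.ofReal (∫ p, |p.1 - p.2| ∂ν) = ENNReal.ofReal (∫ t, (2 * t - 2 * C t t) ∂lam) :=
    by rw [lhs, key, ← rhs]
  refine (ENNReal.ofReal_eq_ofReal_iff (integral_nonneg fun p => abs_nonneg _) ?_).1 this
  rw [hlam]
  refine setIntegral_nonneg measurableSet_Icc fun t ht => ?_
  have := le_fst hC ht ht
  linarith

/-- Fubini identity: ∫ (1−u−v)₊ dν = ∫₀¹ C(t,1−t) dt. -/
lemma integral_maxneg (hC : IsCopula C) (hμ : IsCopulaMeasure C μ) :
    ∫ p, max (1 - p.1 - p.2) 0 ∂(μ.restrict sq) = ∫ t in Icc (0:ℝ) 1, C t (1 - t) := by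
  haveI := hμ.1
  haveI := nu_prob hC hμ
  set ν := μ.restrict sq with hν
  set lam := volume.restrict (Icc (0:ℝ) 1) with hlam
  set T : Set ((ℝ × ℝ) × ℝ) := {q | q.1.1 ≤ q.2 ∧ q.1.2 ≤ 1 - q.2} with hT
  have hTm : MeasurableSet T := by
    have : T = {q : (ℝ × ℝ) × ℝ | q.1.1 ≤ q.2} ∩ {q | q.1.2 ≤ 1 - q.2} := by
      ext q; simp only [hT, mem_setOf_eq, mem_inter_iff]
    rw [this]
    exact (measurableSet_le (measurable_fst.comp measurable_fst) measurable_snd).inter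
      (measurableSet_le (measurable_snd.comp measurable_fst)
        (measurable_const.sub measurable_snd))
  have h1 : ν.prod lam T = ∫⁻ p, lam (Prod.mk p ⁻¹' T) ∂ν := Measure.prod_apply hTm
  have h2 : ν.prod lam T = ∫⁻ t, ν ((fun p => (p, t)) ⁻¹' T) ∂lam :=
    Measure.prod_apply_symm hTm
  have hp_side : ∫⁻ p, lam (Prod.mk p ⁻¹' T) ∂ν
      = ∫⁻ p, ENNReal.ofReal (max (1 - p.1 - p.2) 0) ∂ν := by
    refine lintegral_congr_ae ?_
    filter_upwards [ae_sq] with p hp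
    have hpre : Prod.mk p ⁻¹' T = Icc p.1 (1 - p.2) := by
      ext t
      simp only [hT, mem_preimage, mem_setOf_eq, mem_Icc]
      constructor
      · rintro ⟨ha, hb⟩; exact ⟨ha, by linarith⟩
      · rintro ⟨ha, hb⟩; exact ⟨ha, by linarith⟩
    have hss : Icc p.1 (1 - p.2) ⊆ Icc (0:ℝ) 1 := fun t ht =>
      mem_Icc.mpr ⟨hp.1.1.trans (mem_Icc.1 ht).1, (mem_Icc.1 ht).2.trans (by linarith [hp.2.1])⟩
    rw [hpre, hlam, Measure.restrict_apply measurableSet_Icc,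
      inter_eq_self_of_subset_left hss, Real.volume_Icc, ofReal_max_zero]
    congr 1; ring
  have ht_side : ∫⁻ t, ν ((fun p => (p, t)) ⁻¹' T) ∂lam
      = ∫⁻ t, ENNReal.ofReal (C t (1 - t)) ∂lam := by
    refine lintegral_congr_ae ?_
    filter_upwards [ae_restrict_mem measurableSet_Icc] with t ht
    have hpre : (fun p => (p, t)) ⁻¹' T = {p : ℝ × ℝ | p.1 ≤ t ∧ p.2 ≤ 1 - t} := by
      ext p; simp only [hT, mem_preimage, mem_setOf_eq]
    rw [hpre, m12 hμ ht ⟨by linarith [ht.2], by linarith [ht.1]⟩]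
  have key : ∫⁻ p, ENNReal.ofReal (max (1 - p.1 - p.2) 0) ∂ν
      = ∫⁻ t, ENNReal.ofReal (C t (1 - t)) ∂lam := by
    rw [← hp_side, ← h1, h2, ht_side]
  have lhs : ENNReal.ofReal (∫ p, max (1 - p.1 - p.2) 0 ∂ν)
      = ∫⁻ p, ENNReal.ofReal (max (1 - p.1 - p.2) 0) ∂ν :=
    ofReal_integral_eq_lintegral_ofReal (int_maxneg hC hμ)
      (Filter.Eventually.of_forall fun p => le_max_right _ _)
  have hint2 : Integrable (fun t => C t (1 - t)) lam := by
    rw [hlam]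
    exact ContinuousOn.integrableOn_Icc (contd hC)
  have rhs : ENNReal.ofReal (∫ t, C t (1 - t) ∂lam) = ∫⁻ t, ENNReal.ofReal (C t (1 - t)) ∂lam := by
    refine ofReal_integral_eq_lintegral_ofReal hint2 ?_
    rw [hlam]
    filter_upwards [ae_restrict_mem measurableSet_Icc] with t ht
    have := nonneg hC ht (⟨by linarith [ht.2], by linarith [ht.1]⟩ : (1-t) ∈ Icc (0:ℝ) 1)
    simpa using this
  have : ENNReal.ofReal (∫ p, max (1 - p.1 - p.2) 0 ∂ν)
      = ENNReal.ofReal (∫ t, C t (1 - t) ∂lam) := by rw [lhs, key, ← rhs]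
  refine (ENNReal.ofReal_eq_ofReal_iff (integral_nonneg fun p => le_max_right _ _) ?_).1 this
  rw [hlam]
  exact setIntegral_nonneg measurableSet_Icc fun t ht =>
    nonneg hC ht ⟨by linarith [ht.2], by linarith [ht.1]⟩

end KT

namespace KT

variable {C : ℝ → ℝ → ℝ} {μ : Measure (ℝ × ℝ)}

lemma valIcc_id : ∫ t in Icc (0:ℝ) 1, t = 1/2 := by
  rw [integral_Icc_eq_integral_Ioc, ← intervalIntegral.integral_of_le zero_le_one,
    integral_id]
  norm_num

lemma val_fst (hC : IsCopula C) (hμ : IsCopulaMeasure C μ) :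
    ∫ p : ℝ × ℝ, p.1 ∂(μ.restrict sq) = 1/2 := by
  have h : ∫ p : ℝ × ℝ, p.1 ∂(μ.restrict sq) = ∫ t in Icc (0:ℝ) 1, t :=
    integral_fst hC hμ continuous_id.continuousOn
  rw [h, valIcc_id]

lemma val_snd (hC : IsCopula C) (hμ : IsCopulaMeasure C μ) :
    ∫ p : ℝ × ℝ, p.2 ∂(μ.restrict sq) = 1/2 := by
  have h : ∫ p : ℝ × ℝ, p.2 ∂(μ.restrict sq) = ∫ t in Icc (0:ℝ) 1, t :=
    integral_snd hC hμ continuous_id.continuousOn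
  rw [h, valIcc_id]

lemma valD1 (hC : IsCopula C) (hμ : IsCopulaMeasure C μ) :
    ∫ p : ℝ × ℝ, C p.1 p.1 ∂(μ.restrict sq) = ∫ t in Icc (0:ℝ) 1, C t t :=
  integral_fst hC hμ (contD hC)

lemma valD2 (hC : IsCopula C) (hμ : IsCopulaMeasure C μ) :
    ∫ p : ℝ × ℝ, C p.2 p.2 ∂(μ.restrict sq) = ∫ t in Icc (0:ℝ) 1, C t t :=
  integral_snd hC hμ (contD hC)

lemma vald (hC : IsCopula C) (hμ : IsCopulaMeasure C μ) :
    ∫ p : ℝ × ℝ, C p.1 (1 - p.1) ∂(μ.restrict sq) = ∫ t in Icc (0:ℝ) 1, C t (1 - t) :=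
  integral_fst hC hμ (contd hC)

lemma abs_val (hC : IsCopula C) (hμ : IsCopulaMeasure C μ) :
    ∫ p : ℝ × ℝ, |p.1 - p.2| ∂(μ.restrict sq) = 1 - 2 * ∫ t in Icc (0:ℝ) 1, C t t := by
  rw [integral_abs_sub hC hμ]
  have h1 : IntegrableOn (fun t : ℝ => 2 * t) (Icc (0:ℝ) 1) :=
    (continuous_const.mul continuous_id).integrableOn_Icc
  have h2 : IntegrableOn (fun t : ℝ => 2 * C t t) (Icc (0:ℝ) 1) :=
    ContinuousOn.integrableOn_Icc (continuousOn_const.mul (contD hC))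
  have hsplit : ∫ t in Icc (0:ℝ) 1, (2 * t - 2 * C t t)
      = (∫ t in Icc (0:ℝ) 1, 2 * t) - ∫ t in Icc (0:ℝ) 1, 2 * C t t := integral_sub h1 h2
  rw [hsplit, integral_const_mul, integral_const_mul, valIcc_id]
  ring

lemma int_sum (hC : IsCopula C) (hμ : IsCopulaMeasure C μ) :
    Integrable (fun p : ℝ × ℝ => p.1 + p.2) (μ.restrict sq) :=
  (int_fst hC hμ).add (int_snd hC hμ)

lemma val_sum (hC : IsCopula C) (hμ : IsCopulaMeasure C μ) :
    ∫ p : ℝ × ℝ, (p.1 + p.2) ∂(μ.restrict sq) = 1 := by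
  have h : ∫ p : ℝ × ℝ, (p.1 + p.2) ∂(μ.restrict sq)
      = (∫ p : ℝ × ℝ, p.1 ∂(μ.restrict sq)) + ∫ p : ℝ × ℝ, p.2 ∂(μ.restrict sq) :=
    integral_add (int_fst hC hμ) (int_snd hC hμ)
  rw [h, val_fst hC hμ, val_snd hC hμ]; norm_num

lemma int_sum1 (hC : IsCopula C) (hμ : IsCopulaMeasure C μ) :
    Integrable (fun p : ℝ × ℝ => p.1 + p.2 - 1) (μ.restrict sq) := by
  haveI := nu_prob hC hμ
  exact (int_sum hC hμ).sub (integrable_const 1)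

lemma h3val (hC : IsCopula C) (hμ : IsCopulaMeasure C μ) :
    ∫ p : ℝ × ℝ, (p.1 + p.2 - 1) ∂(μ.restrict sq) = 0 := by
  haveI := nu_prob hC hμ
  have h : ∫ p : ℝ × ℝ, (p.1 + p.2 - 1) ∂(μ.restrict sq)
      = (∫ p : ℝ × ℝ, (p.1 + p.2) ∂(μ.restrict sq)) - ∫ _ : ℝ × ℝ, (1:ℝ) ∂(μ.restrict sq) :=
    integral_sub (int_sum hC hμ) (integrable_const 1)
  rw [h, val_sum hC hμ, integral_const, probReal_univ]
  simp

lemma Epos (hC : IsCopula C) (hμ : IsCopulaMeasure C μ) :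
    ∫ p : ℝ × ℝ, max (p.1 + p.2 - 1) 0 ∂(μ.restrict sq)
      = ∫ t in Icc (0:ℝ) 1, C t (1 - t) := by
  haveI := nu_prob hC hμ
  have hfun : (fun p : ℝ × ℝ => max (p.1 + p.2 - 1) 0)
      = fun p : ℝ × ℝ => max (1 - p.1 - p.2) 0 + (p.1 + p.2 - 1) := by
    funext p
    rcases le_total (p.1 + p.2 - 1) 0 with h | h
    · rw [max_eq_right h, max_eq_left (by linarith)]; ring
    · rw [max_eq_left h, max_eq_right (by linarith)]; ring
  have h : ∫ p : ℝ × ℝ, (max (1 - p.1 - p.2) 0 + (p.1 + p.2 - 1)) ∂(μ.restrict sq)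
      = (∫ p : ℝ × ℝ, max (1 - p.1 - p.2) 0 ∂(μ.restrict sq))
        + ∫ p : ℝ × ℝ, (p.1 + p.2 - 1) ∂(μ.restrict sq) :=
    integral_add (int_maxneg hC hμ) (int_sum1 hC hμ)
  rw [hfun, h, integral_maxneg hC hμ, h3val hC hμ]
  ring

lemma Emin (hC : IsCopula C) (hμ : IsCopulaMeasure C μ) :
    ∫ p : ℝ × ℝ, min p.1 p.2 ∂(μ.restrict sq) = ∫ t in Icc (0:ℝ) 1, C t t := by
  have hfun : (fun p : ℝ × ℝ => min p.1 p.2)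
      = fun p : ℝ × ℝ => (p.1 + p.2 - |p.1 - p.2|) / 2 := by
    funext p
    rcases le_total p.1 p.2 with h | h
    · rw [min_eq_left h, abs_of_nonpos (by linarith : p.1 - p.2 ≤ 0)]; ring
    · rw [min_eq_right h, abs_of_nonneg (by linarith : (0:ℝ) ≤ p.1 - p.2)]; ring
  have h : ∫ p : ℝ × ℝ, ((p.1 + p.2) - |p.1 - p.2|) ∂(μ.restrict sq)
      = (∫ p : ℝ × ℝ, (p.1 + p.2) ∂(μ.restrict sq))
        - ∫ p : ℝ × ℝ, |p.1 - p.2| ∂(μ.restrict sq) :=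
    integral_sub (int_sum hC hμ) (int_abs hC hμ)
  rw [hfun, integral_div, h, val_sum hC hμ, abs_val hC hμ]
  ring

/-- the four key integral bounds -/
lemma main_bounds (hC : IsCopula C) (hμ : IsCopulaMeasure C μ) :
    (∫ p, C p.1 p.2 ∂(μ.restrict sq) ≤ ∫ t in Icc (0:ℝ) 1, C t t) ∧
    (2 * (∫ t in Icc (0:ℝ) 1, C t t) - 1/2 ≤ ∫ p, C p.1 p.2 ∂(μ.restrict sq)) ∧
    ((∫ t in Icc (0:ℝ) 1, C t (1 - t)) ≤ ∫ p, C p.1 p.2 ∂(μ.restrict sq)) ∧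
    (∫ p, C p.1 p.2 ∂(μ.restrict sq) ≤ 2 * ∫ t in Icc (0:ℝ) 1, C t (1 - t)) := by
  haveI := nu_prob hC hμ
  refine ⟨?_, ?_, ?_, ?_⟩
  · -- I ≤ A
    have h := integral_mono_ae (intC hC hμ) (int_min hC hμ) ?_
    · rw [Emin hC hμ] at h; exact h
    · filter_upwards [ae_sq] with p hp
      exact le_min (le_fst hC hp.1 hp.2) (le_snd hC hp.1 hp.2)
  · -- 2A − 1/2 ≤ I
    have hint1 : Integrable (fun p : ℝ × ℝ => C p.1 p.1 + C p.2 p.2 - |p.1 - p.2|)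
        (μ.restrict sq) := ((intD1 hC hμ).add (intD2 hC hμ)).sub (int_abs hC hμ)
    have hint2 : Integrable (fun p : ℝ × ℝ => 2 * C p.1 p.2) (μ.restrict sq) :=
      (intC hC hμ).const_mul 2
    have h := integral_mono_ae hint1 hint2 ?_
    · have e1 : ∫ p : ℝ × ℝ, (C p.1 p.1 + C p.2 p.2 - |p.1 - p.2|) ∂(μ.restrict sq)
          = (∫ p : ℝ × ℝ, (C p.1 p.1 + C p.2 p.2) ∂(μ.restrict sq))
            - ∫ p : ℝ × ℝ, |p.1 - p.2| ∂(μ.restrict sq) :=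
        integral_sub ((intD1 hC hμ).add (intD2 hC hμ)) (int_abs hC hμ)
      have e2 : ∫ p : ℝ × ℝ, (C p.1 p.1 + C p.2 p.2) ∂(μ.restrict sq)
          = (∫ p : ℝ × ℝ, C p.1 p.1 ∂(μ.restrict sq))
            + ∫ p : ℝ × ℝ, C p.2 p.2 ∂(μ.restrict sq) :=
        integral_add (intD1 hC hμ) (intD2 hC hμ)
      rw [e1, e2, valD1 hC hμ, valD2 hC hμ, abs_val hC hμ, integral_const_mul] at h
      linarith
    · filter_upwards [ae_sq] with p hp
      rcases le_total p.1 p.2 with h | h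
      · have hm := mono2 hC hp.1 hp.1.1 h hp.2.2
        have hl := lip1 hC hp.1.1 h hp.2.2 hp.2
        rw [abs_of_nonpos (by linarith : p.1 - p.2 ≤ 0)]
        linarith
      · have hm := mono1 hC hp.2.1 h hp.1.2 hp.2
        have hl := lip2 hC hp.1 hp.2.1 h hp.1.2
        rw [abs_of_nonneg (by linarith : (0:ℝ) ≤ p.1 - p.2)]
        linarith
  · -- B ≤ I
    have h := integral_mono_ae (int_maxpos hC hμ) (intC hC hμ) ?_
    · rw [Epos hC hμ] at h; exact h
    · filter_upwards [ae_sq] with p hp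
      exact max_le (by linarith [ge_frechet hC hp.1 hp.2]) (nonneg hC hp.1 hp.2)
  · -- I ≤ 2B
    have hint1 : Integrable (fun p : ℝ × ℝ => C p.1 (1 - p.1) + max (p.1 + p.2 - 1) 0)
        (μ.restrict sq) := (intd hC hμ).add (int_maxpos hC hμ)
    have h := integral_mono_ae (intC hC hμ) hint1 ?_
    · have e1 : ∫ p : ℝ × ℝ, (C p.1 (1 - p.1) + max (p.1 + p.2 - 1) 0) ∂(μ.restrict sq)
          = (∫ p : ℝ × ℝ, C p.1 (1 - p.1) ∂(μ.restrict sq))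
            + ∫ p : ℝ × ℝ, max (p.1 + p.2 - 1) 0 ∂(μ.restrict sq) :=
        integral_add (intd hC hμ) (int_maxpos hC hμ)
      rw [e1, vald hC hμ, Epos hC hμ] at h
      linarith
    · filter_upwards [ae_sq] with p hp
      have h1u : (1 - p.1) ∈ Icc (0:ℝ) 1 := ⟨by linarith [hp.1.2], by linarith [hp.1.1]⟩
      rcases le_total p.2 (1 - p.1) with h | h
      · have hm := mono2 hC hp.1 hp.2.1 h h1u.2
        have := le_max_right (p.1 + p.2 - 1) (0:ℝ)
        linarith
      · have hl := lip2 hC hp.1 h1u.1 h hp.2.2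
        have := le_max_left (p.1 + p.2 - 1) (0:ℝ)
        linarith

end KT


/-- Bounds for Kendall's tau given Spearman's footrule and Gini's gamma. -/
theorem kendallTau_bounds (C : ℝ → ℝ → ℝ) (hC : IsCopula C)
    (μ : Measure (ℝ × ℝ)) (hμ : IsCopulaMeasure C μ) :
    max ((4/3) * footrule C - 1/3) (-(2/3) * footrule C + giniGamma C - 1/3)
        ≤ kendallTauInt C μ ∧
      kendallTauInt C μ
        ≤ min ((2/3) * footrule C + 1/3) (-(4/3) * footrule C + 2 * giniGamma C + 1/3) := by
  have hb := KT.main_bounds hC hμ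
  unfold KT.sq at hb
  have hdiag : ∫ u in (0:ℝ)..1, C u u = ∫ t in Icc (0:ℝ) 1, C t t := by
    rw [intervalIntegral.integral_of_le zero_le_one, integral_Icc_eq_integral_Ioc]
  have hanti : ∫ u in (0:ℝ)..1, C u (1 - u) = ∫ t in Icc (0:ℝ) 1, C t (1 - t) := by
    rw [intervalIntegral.integral_of_le zero_le_one, integral_Icc_eq_integral_Ioc]
  unfold kendallTauInt footrule giniGamma
  rw [hdiag, hanti]
  obtain ⟨f1, f2, f3, f4⟩ := hb
  constructor
  · rw [max_le_iff]
    constructor <;> linarith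
  · rw [le_min_iff]
    constructor <;> linarith
end

section
/- Define the linear map 𝒜 : ℝ³ → ℝ³ by 𝒜(φ, γ, τ) = (φ − (3/2)·γ, −γ, −τ). Then 𝒜 is an involution (𝒜 ∘ 𝒜 is the identity) and 𝒜 maps the polyhedron Ω onto itself, i.e., 𝒜(Ω) = Ω. -/
open MeasureTheory Set

/-- The polyhedron Ω in ℝ³ (coordinates (φ, γ, τ)). -/
def Omega : Set (ℝ × ℝ × ℝ) :=
  {p | -2 * p.1 ≤ 1 ∧
       -8 * p.1 + 6 * p.2.1 ≤ 1 ∧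
       -2 * p.1 + 3 * p.2.1 ≤ 1 ∧
       4 * p.1 - 3 * p.2.2 ≤ 1 ∧
       -2 * p.1 + 3 * p.2.2 ≤ 1 ∧
       -2 * p.1 + 3 * p.2.1 - 3 * p.2.2 ≤ 1 ∧
       4 * p.1 - 6 * p.2.1 + 3 * p.2.2 ≤ 1}

/-- The map 𝒜(φ, γ, τ) = (φ − (3/2)γ, −γ, −τ). -/
noncomputable def Amap : ℝ × ℝ × ℝ → ℝ × ℝ × ℝ :=
  fun p => (p.1 - (3/2) * p.2.1, -p.2.1, -p.2.2)

/-- 𝒜 is an involution and maps the polyhedron Ω onto itself. -/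
theorem Amap_involutive_and_maps_Omega_onto_itself :
    Amap ∘ Amap = id ∧ Amap '' Omega = Omega := by
  have hinv : ∀ p : ℝ × ℝ × ℝ, Amap (Amap p) = p := by
    intro p; simp [Amap]
  have hmaps : ∀ p ∈ Omega, Amap p ∈ Omega := by
    rintro ⟨φ, γ, τ⟩ ⟨h1, h2, h3, h4, h5, h6, h7⟩
    simp only [Omega, Amap, Set.mem_setOf_eq] at *
    refine ⟨by linarith, by linarith, by linarith, by linarith, by linarith,
      by linarith, by linarith⟩
  constructor
  · funext p; exact hinv p
  · ext p
    constructor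
    · rintro ⟨q, hq, rfl⟩; exact hmaps q hq
    · intro hp; exact ⟨Amap p, hmaps p hp, hinv p⟩
end
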